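/- arXiv:1907.12971 — 8 statements merged into one kernel-verified Lean document; each statement's English description precedes it below -/
import Mathlib

section
/- Let A ∈ ℝ^{M×M}, D ∈ ℝ^{N×N}, Q ∈ ℝ^{M×N}, G ∈ ℝ^{N×M}. If X : ℝ → ℝ^{M×N} is differentiable and satisfies X'(t) = A·X(t) + X(t)·D + Q − X(t)·G·X(t) for all t ≥ 0, then for every t_n ≥ 0 and every step size h > 0, X(t_n + h) = e^{hA}·X(t_n)·e^{hD} + h·∫_0^1 e^{(1−s)hA}·Q·e^{(1−s)hD} ds − h·∫_0^1 e^{(1−s)hA}·X(t_n + s·h)·G·X(t_n + s·h)·e^{(1−s)hD} ds. -/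
open MeasureTheory intervalIntegral Matrix

open Filter
theorem matrix_exp_slope (n : ℕ) (A : Matrix (Fin n) (Fin n) ℝ) (t : ℝ) :
    Tendsto (slope (fun u : ℝ => NormedSpace.exp (u • A)) t) (nhdsWithin t {t}ᶜ)
      (nhds (NormedSpace.exp (t • A) * A)) := by
  letI : NormedRing (Matrix (Fin n) (Fin n) ℝ) := Matrix.linftyOpNormedRing
  letI : NormedAlgebra ℝ (Matrix (Fin n) (Fin n) ℝ) := Matrix.linftyOpNormedAlgebra
  exact hasDerivAt_iff_tendsto_slope.mp (hasDerivAt_exp_smul_const A t)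

theorem matrix_exp_slope' (n : ℕ) (A : Matrix (Fin n) (Fin n) ℝ) (t : ℝ) :
    Tendsto (slope (fun u : ℝ => NormedSpace.exp (u • A)) t) (nhdsWithin t {t}ᶜ)
      (nhds (A * NormedSpace.exp (t • A))) := by
  letI : NormedRing (Matrix (Fin n) (Fin n) ℝ) := Matrix.linftyOpNormedRing
  letI : NormedAlgebra ℝ (Matrix (Fin n) (Fin n) ℝ) := Matrix.linftyOpNormedAlgebra
  exact hasDerivAt_iff_tendsto_slope.mp (hasDerivAt_exp_smul_const' A t)

attribute [local instance] Matrix.normedAddCommGroup Matrix.normedSpace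

instance matENormedAddMonoid {m n : Type*} [Fintype m] [Fintype n] :
    ENormedAddMonoid (Matrix m n ℝ) :=
  inferInstanceAs (ENormedAddMonoid (m → n → ℝ))

set_option maxHeartbeats 1000000

theorem hasDerivAt_matmul {m n p : ℕ} {f : ℝ → Matrix (Fin m) (Fin n) ℝ}
    {g : ℝ → Matrix (Fin n) (Fin p) ℝ} {f' : Matrix (Fin m) (Fin n) ℝ}
    {g' : Matrix (Fin n) (Fin p) ℝ} {x : ℝ}
    (hf : HasDerivAt f f' x) (hg : HasDerivAt g g' x) :
    HasDerivAt (fun t => f t * g t) (f' * g x + f x * g') x := by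
  have hfe : ∀ i j, HasDerivAt (fun t => f t i j) (f' i j) x := fun i j =>
    hasDerivAt_pi.1 (hasDerivAt_pi.1 hf i) j
  have hge : ∀ i j, HasDerivAt (fun t => g t i j) (g' i j) x := fun i j =>
    hasDerivAt_pi.1 (hasDerivAt_pi.1 hg i) j
  have key : ∀ i j, HasDerivAt (fun t => (f t * g t) i j) ((f' * g x + f x * g') i j) x := by
    intro i j
    simp only [Matrix.mul_apply, Matrix.add_apply, ← Finset.sum_add_distrib]
    exact HasDerivAt.fun_sum fun k _ => (hfe i k).mul (hge k j)
  exact hasDerivAt_pi.2 fun i => hasDerivAt_pi.2 fun j => key i j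


/-- A solution of the matrix Riccati differential equation satisfies,
for every `tₙ ≥ 0` and step size `h > 0`,
`X(tₙ+h) = e^{hA}·X(tₙ)·e^{hD} + h·∫₀¹ e^{(1−s)hA}·Q·e^{(1−s)hD} ds
         − h·∫₀¹ e^{(1−s)hA}·X(tₙ+sh)·G·X(tₙ+sh)·e^{(1−s)hD} ds`. -/
theorem mrde_step_integral_form (M N : ℕ)
    (A : Matrix (Fin M) (Fin M) ℝ) (D : Matrix (Fin N) (Fin N) ℝ)
    (Q : Matrix (Fin M) (Fin N) ℝ) (G : Matrix (Fin N) (Fin M) ℝ)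
    (X : ℝ → Matrix (Fin M) (Fin N) ℝ)
    (hX : ∀ t, 0 ≤ t → HasDerivAt X (A * X t + X t * D + Q - X t * G * X t) t) :
    ∀ tn, 0 ≤ tn → ∀ h : ℝ, 0 < h →
      X (tn + h) = NormedSpace.exp (h • A) * X tn * NormedSpace.exp (h • D) +
        h • (∫ s in (0:ℝ)..1,
          NormedSpace.exp (((1 - s) * h) • A) * Q *
            NormedSpace.exp (((1 - s) * h) • D)) -
        h • ∫ s in (0:ℝ)..1,
          NormedSpace.exp (((1 - s) * h) • A) *
            (X (tn + s * h) * G * X (tn + s * h)) *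
              NormedSpace.exp (((1 - s) * h) • D) := by
  intro tn htn h hh
  have hlin : ∀ s : ℝ, HasDerivAt (fun s : ℝ => (1 - s) * h) (-h) s := by
    intro s
    simpa using (((hasDerivAt_id s).const_sub 1).mul_const h)
  set E : ℝ → Matrix (Fin M) (Fin M) ℝ := fun s => NormedSpace.exp (((1 - s) * h) • A)
    with hEdef
  set F : ℝ → Matrix (Fin N) (Fin N) ℝ := fun s => NormedSpace.exp (((1 - s) * h) • D)
    with hFdef
  set Xc : ℝ → Matrix (Fin M) (Fin N) ℝ := fun s => X (tn + s * h) with hXcdef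
  have hEd : ∀ s : ℝ, HasDerivAt E ((-h) • (E s * A)) s := by
    intro s
    have h2 : HasDerivAt (fun u : ℝ => NormedSpace.exp (u • A))
        (NormedSpace.exp (((1 - s) * h) • A) * A) ((1 - s) * h) :=
      hasDerivAt_iff_tendsto_slope.mpr (matrix_exp_slope M A ((1 - s) * h))
    exact h2.scomp s (hlin s)
  have hFd : ∀ s : ℝ, HasDerivAt F ((-h) • (D * F s)) s := by
    intro s
    have h2 : HasDerivAt (fun u : ℝ => NormedSpace.exp (u • D))
        (D * NormedSpace.exp (((1 - s) * h) • D)) ((1 - s) * h) :=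
      hasDerivAt_iff_tendsto_slope.mpr (matrix_exp_slope' N D ((1 - s) * h))
    exact h2.scomp s (hlin s)
  have hXd : ∀ s ∈ Set.Icc (0:ℝ) 1, HasDerivAt Xc
      (h • (A * Xc s + Xc s * D + Q - Xc s * G * Xc s)) s := by
    intro s hs
    have hpos : 0 ≤ tn + s * h := by nlinarith [hs.1, hs.2]
    have h1 : HasDerivAt (fun s : ℝ => tn + s * h) h s := by
      simpa using ((hasDerivAt_id s).mul_const h).const_add tn
    exact (hX _ hpos).scomp s h1
  have hY : ∀ s ∈ Set.Icc (0:ℝ) 1,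
      HasDerivAt (fun s => E s * Xc s * F s)
        (h • (E s * (Q - Xc s * G * Xc s) * F s)) s := by
    intro s hs
    have hd := hasDerivAt_matmul (hasDerivAt_matmul (hEd s) (hXd s hs)) (hFd s)
    convert hd using 1
    simp only [Matrix.mul_sub, Matrix.sub_mul, Matrix.mul_add, Matrix.add_mul,
      Matrix.smul_mul, Matrix.mul_smul, smul_add, smul_sub, neg_smul,
      Matrix.neg_mul, Matrix.mul_neg, neg_neg, Matrix.mul_assoc]
    abel
  -- continuity and integrability
  have hEc : Continuous E := continuous_iff_continuousAt.mpr fun s => (hEd s).continuousAt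
  have hFc : Continuous F := continuous_iff_continuousAt.mpr fun s => (hFd s).continuousAt
  have hint1 : IntervalIntegrable (fun s => E s * Q * F s) volume 0 1 :=
    ((hEc.matrix_mul continuous_const).matrix_mul hFc).intervalIntegrable 0 1
  have hRc : ContinuousOn (fun s => E s * (Xc s * G * Xc s) * F s) (Set.Icc (0:ℝ) 1) := by
    intro s hs
    have hXG := hasDerivAt_matmul (hXd s hs)
      (hasDerivAt_const (𝕜 := ℝ) (c := G) s)
    have hXGX := hasDerivAt_matmul hXG (hXd s hs)
    have := hasDerivAt_matmul (hasDerivAt_matmul (hEd s) hXGX) (hFd s)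
    exact this.continuousAt.continuousWithinAt
  have hint2 : IntervalIntegrable (fun s => E s * (Xc s * G * Xc s) * F s) volume 0 1 := by
    apply ContinuousOn.intervalIntegrable
    rwa [Set.uIcc_of_le zero_le_one]
  have i1 : IntervalIntegrable (fun s => h • (E s * Q * F s)) volume 0 1 :=
    (((hEc.matrix_mul continuous_const).matrix_mul hFc).const_smul h).intervalIntegrable 0 1
  have i2 : IntervalIntegrable (fun s => h • (E s * (Xc s * G * Xc s) * F s)) volume 0 1 := by
    apply ContinuousOn.intervalIntegrable
    rw [Set.uIcc_of_le zero_le_one]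
    exact hRc.const_smul h
  have hintY : IntervalIntegrable (fun s => h • (E s * (Q - Xc s * G * Xc s) * F s))
      volume 0 1 := by
    have heq : (fun s => h • (E s * (Q - Xc s * G * Xc s) * F s)) =
        fun s => h • (E s * Q * F s) - h • (E s * (Xc s * G * Xc s) * F s) := by
      funext s
      simp only [Matrix.mul_sub, Matrix.sub_mul, smul_sub]
    rw [heq]
    exact i1.sub i2
  have key := intervalIntegral.integral_eq_sub_of_hasDerivAt
    (f := fun s => E s * Xc s * F s)
    (f' := fun s => h • (E s * (Q - Xc s * G * Xc s) * F s))
    (fun s hs => hY s (by rwa [Set.uIcc_of_le zero_le_one] at hs)) hintY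
  have split : (∫ s in (0:ℝ)..1, h • (E s * (Q - Xc s * G * Xc s) * F s)) =
      h • (∫ s in (0:ℝ)..1, E s * Q * F s) -
      h • (∫ s in (0:ℝ)..1, E s * (Xc s * G * Xc s) * F s) := by
    simp only [Matrix.mul_sub, Matrix.sub_mul, smul_sub]
    rw [intervalIntegral.integral_sub i1 i2,
      intervalIntegral.integral_smul, intervalIntegral.integral_smul]
  have e1 : E 1 * Xc 1 * F 1 = X (tn + h) := by
    simp [hEdef, hFdef, hXcdef, NormedSpace.exp_zero]
  have e0 : E 0 * Xc 0 * F 0 =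
      NormedSpace.exp (h • A) * X tn * NormedSpace.exp (h • D) := by
    simp [hEdef, hFdef, hXcdef]
  rw [split, e1, e0] at key
  have : X (tn + h) =
      NormedSpace.exp (h • A) * X tn * NormedSpace.exp (h • D) +
        (h • (∫ s in (0:ℝ)..1, E s * Q * F s) -
         h • (∫ s in (0:ℝ)..1, E s * (Xc s * G * Xc s) * F s)) := by
    rw [key]; abel
  rw [this]
  simp only [hEdef, hFdef, hXcdef]
  abel
end

section
/- (Lemma 1) Let A ∈ ℝ^{M×M}, D ∈ ℝ^{N×N}, let m ≥ 1, and let Q : ℝ → ℝ^{M×N} be m-times continuously differentiable. Suppose X : ℝ → ℝ^{M×N} is differentiable with X'(t) = A·X(t) + X(t)·D + Q(t) and X(t_n) = X_n. Then for every h > 0, X(t_n + h) = e^{hS}(X_n) + Σ_{j=1}^{m} h^{j}·φ_j(hS)(Q^{(j−1)}(t_n)) + R_m(h), where R_m(h) = (h^{m+1}/(m−1)!)·∫_0^1 ∫_0^1 s^{m}·(1−θ)^{m−1}·e^{(1−s)hA}·Q^{(m)}(t_n + θ·s·h)·e^{(1−s)hD} dθ ds. -/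
open MeasureTheory intervalIntegral Matrix Finset

attribute [local instance] Matrix.normedAddCommGroup Matrix.normedSpace

/-- The `φ`-functions of a continuous linear endomorphism `L`:
`φ₀(L) = e^{L}` and `φⱼ(L) = ∫₀¹ e^{(1−θ)L}·θ^{j−1}/(j−1)! dθ` for `j ≥ 1`. -/
noncomputable def phi {V : Type*} [NormedAddCommGroup V] [NormedSpace ℝ V]
    (j : ℕ) (L : V →L[ℝ] V) : V →L[ℝ] V :=
  if j = 0 then NormedSpace.exp L
  else ∫ θ in (0:ℝ)..1,
    (θ ^ (j - 1) / (Nat.factorial (j - 1) : ℝ)) • NormedSpace.exp ((1 - θ) • L)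

section MsdeSec

attribute [-instance] instTopologicalSpaceMatrix Matrix.instUniformSpace

/-- The ring topology on square matrices, for the normed topology. -/
def msdeMatTopRing {n : Type*} [Fintype n] : IsTopologicalRing (Matrix n n ℝ) := by
  exact Matrix.topologicalRing

attribute [local instance] msdeMatTopRing

/-- Rational scalars on continuous linear endomorphisms, by restriction from `ℝ`. -/
noncomputable def msdeRatCLM {V : Type*} [NormedAddCommGroup V] [NormedSpace ℝ V] :
    NormedAlgebra ℚ (V →L[ℝ] V) :=
  NormedAlgebra.restrictScalars ℚ ℝ _

attribute [local instance] msdeRatCLM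

namespace MsdeAux

variable {M N : ℕ}

/-- Left multiplication by a square matrix as a continuous linear map on rectangular matrices. -/
noncomputable def lmul (A : Matrix (Fin M) (Fin M) ℝ) :
    Matrix (Fin M) (Fin N) ℝ →L[ℝ] Matrix (Fin M) (Fin N) ℝ :=
  LinearMap.toContinuousLinearMap
    { toFun := fun X => A * X
      map_add' := fun X Y => Matrix.mul_add _ X Y
      map_smul' := fun c X => (Matrix.mul_smul A c X) }

@[simp] lemma lmul_apply (A : Matrix (Fin M) (Fin M) ℝ) (X : Matrix (Fin M) (Fin N) ℝ) :
    (lmul A) X = A * X := rfl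

/-- Right multiplication as a continuous linear map, as a function on the opposite algebra. -/
noncomputable def rmul (B : (Matrix (Fin N) (Fin N) ℝ)ᵐᵒᵖ) :
    Matrix (Fin M) (Fin N) ℝ →L[ℝ] Matrix (Fin M) (Fin N) ℝ :=
  LinearMap.toContinuousLinearMap
    { toFun := fun X => X * B.unop
      map_add' := fun X Y => Matrix.add_mul X Y _
      map_smul' := fun c X => (Matrix.smul_mul c X B.unop) }

@[simp] lemma rmul_apply (B : (Matrix (Fin N) (Fin N) ℝ)ᵐᵒᵖ) (X : Matrix (Fin M) (Fin N) ℝ) :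
    (rmul B) X = X * B.unop := rfl

noncomputable def lmulAlg :
    Matrix (Fin M) (Fin M) ℝ →ₐ[ℝ]
      (Matrix (Fin M) (Fin N) ℝ →L[ℝ] Matrix (Fin M) (Fin N) ℝ) where
  toFun := lmul
  map_one' := by ext X; simp
  map_mul' := fun A B => by ext X; simp [Matrix.mul_assoc, ContinuousLinearMap.mul_apply]
  map_zero' := by ext X; simp
  map_add' := fun A B => by ext X; simp [Matrix.add_mul]
  commutes' := fun r => by
    ext X
    simp [Algebra.algebraMap_eq_smul_one, Matrix.smul_mul, Matrix.one_mul]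

noncomputable def rmulAlg :
    (Matrix (Fin N) (Fin N) ℝ)ᵐᵒᵖ →ₐ[ℝ]
      (Matrix (Fin M) (Fin N) ℝ →L[ℝ] Matrix (Fin M) (Fin N) ℝ) where
  toFun := rmul
  map_one' := by ext X; simp
  map_mul' := fun A B => by
    ext X; simp [ContinuousLinearMap.mul_apply, MulOpposite.unop_mul, Matrix.mul_assoc]
  map_zero' := by ext X; simp
  map_add' := fun A B => by ext X; simp [Matrix.mul_add]
  commutes' := fun r => by
    ext X
    simp [Algebra.algebraMap_eq_smul_one, Matrix.mul_smul, Matrix.mul_one]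

lemma continuous_lmulAlg : Continuous (MsdeAux.lmulAlg (M := M) (N := N)) :=
  (lmulAlg (M := M) (N := N)).toLinearMap.continuous_of_finiteDimensional

lemma continuous_rmulAlg : Continuous (MsdeAux.rmulAlg (M := M) (N := N)) :=
  (rmulAlg (M := M) (N := N)).toLinearMap.continuous_of_finiteDimensional


lemma map_exp_mat {n : Type*} [Fintype n] [DecidableEq n] {B : Type*} [NormedRing B]
    [NormedAlgebra ℝ B] [NormedAlgebra ℚ B] [CompleteSpace B] (f : Matrix n n ℝ →ₐ[ℝ] B)
    (hf : Continuous f) (x : Matrix n n ℝ) : f (NormedSpace.exp x) = NormedSpace.exp (f x) := by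
  letI : NormedRing (Matrix n n ℝ) := Matrix.linftyOpNormedRing
  letI : NormedAlgebra ℝ (Matrix n n ℝ) := Matrix.linftyOpNormedAlgebra
  letI : NormedAlgebra ℚ (Matrix n n ℝ) := NormedAlgebra.restrictScalars ℚ ℝ _
  haveI : CompleteSpace (Matrix n n ℝ) := FiniteDimensional.complete ℝ _
  have := NormedSpace.map_exp f (by convert hf) x
  convert this using 2

lemma map_exp_mat_op {n : Type*} [Fintype n] [DecidableEq n] {B : Type*} [NormedRing B]
    [NormedAlgebra ℝ B] [NormedAlgebra ℚ B] [CompleteSpace B] (f : (Matrix n n ℝ)ᵐᵒᵖ →ₐ[ℝ] B)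
    (hf : Continuous f) (x : (Matrix n n ℝ)ᵐᵒᵖ) :
    f (NormedSpace.exp x) = NormedSpace.exp (f x) := by
  letI : NormedRing (Matrix n n ℝ) := Matrix.linftyOpNormedRing
  letI : NormedAlgebra ℝ (Matrix n n ℝ) := Matrix.linftyOpNormedAlgebra
  letI : NormedAlgebra ℚ (Matrix n n ℝ) := NormedAlgebra.restrictScalars ℚ ℝ _
  haveI : CompleteSpace (Matrix n n ℝ) := FiniteDimensional.complete ℝ _
  have := NormedSpace.map_exp f (by convert hf) x
  convert this using 2

lemma exp_sylvester (A : Matrix (Fin M) (Fin M) ℝ) (D : Matrix (Fin N) (Fin N) ℝ)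
    (S : Matrix (Fin M) (Fin N) ℝ →L[ℝ] Matrix (Fin M) (Fin N) ℝ)
    (hS : ∀ X, S X = A * X + X * D) (t : ℝ) (Y : Matrix (Fin M) (Fin N) ℝ) :
    NormedSpace.exp (t • S) Y =
      NormedSpace.exp (t • A) * Y * NormedSpace.exp (t • D) := by
  have hdecomp : t • S = lmul (t • A) + rmul (MulOpposite.op (t • D)) := by
    refine ContinuousLinearMap.ext fun X => ?_
    show t • (S X) = lmul (t • A) X + rmul (MulOpposite.op (t • D)) X
    rw [hS]
    simp [smul_add, Matrix.smul_mul, Matrix.mul_smul]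
  have hcomm : Commute (lmul (N := N) (t • A)) (rmul (M := M) (MulOpposite.op (t • D))) := by
    refine ContinuousLinearMap.ext fun X => ?_
    simp [ContinuousLinearMap.mul_apply, Matrix.mul_assoc]
  have h1 : NormedSpace.exp (lmul (N := N) (t • A)) = lmul (NormedSpace.exp (t • A)) :=
    (map_exp_mat (lmulAlg (M := M) (N := N)) continuous_lmulAlg (t • A)).symm
  have h2 : NormedSpace.exp (rmul (M := M) (MulOpposite.op (t • D))) =
      rmul (MulOpposite.op (NormedSpace.exp (t • D))) := by
    have h := (map_exp_mat_op (rmulAlg (M := M) (N := N)) continuous_rmulAlg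
      (MulOpposite.op (t • D))).symm
    rwa [NormedSpace.exp_op] at h
  rw [hdecomp, NormedSpace.exp_add_of_commute hcomm, h1, h2,
    ContinuousLinearMap.mul_apply, rmul_apply, lmul_apply, MulOpposite.unop_op,
    Matrix.mul_assoc]


lemma telescope {V : Type*} [AddCommGroup V] [Module ℝ V] (w : ℕ → V) (x : ℝ) (k : ℕ) :
    ∑ j ∈ Finset.range (k+1),
      ((x^j / (Nat.factorial j : ℝ)) • w (j+1) +
        (-((j : ℝ) * x^(j-1)) / (Nat.factorial j : ℝ)) • w j) =
      (x^k / (Nat.factorial k : ℝ)) • w (k+1) := by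
  induction k with
  | zero => simp
  | succ n ih =>
    rw [Finset.sum_range_succ, ih]
    have hc : (-(((n+1 : ℕ) : ℝ) * x^((n+1)-1)) / ((Nat.factorial (n+1) : ℕ) : ℝ)) =
        -(x^n / (Nat.factorial n : ℝ)) := by
      rw [Nat.add_sub_cancel, Nat.factorial_succ]
      push_cast
      rw [neg_div, mul_div_mul_left _ _ (by positivity : ((n:ℝ)+1) ≠ 0)]
    push_cast at hc ⊢
    rw [hc, neg_smul]
    abel

lemma taylor_aux (k : ℕ) (Q : ℝ → Matrix (Fin M) (Fin N) ℝ) (hQ : ContDiff ℝ (k+1 : ℕ) Q)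
    (tn τ : ℝ) :
    Q (tn + τ) =
      (∑ j ∈ Finset.range (k+1), (τ^j / (Nat.factorial j : ℝ)) • iteratedDeriv j Q tn)
        + ∫ σ in (0:ℝ)..τ,
            ((τ - σ)^k / (Nat.factorial k : ℝ)) • iteratedDeriv (k+1) Q (tn + σ) := by
  have hQc : Continuous (iteratedDeriv (k+1) Q) :=
    hQ.continuous_iteratedDeriv (k+1) (by exact_mod_cast le_rfl)
  have hQd : ∀ (j : ℕ), j < k+1 → ∀ x, HasDerivAt (iteratedDeriv j Q)
      (iteratedDeriv (j+1) Q x) x := by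
    intro j hj x
    have hd : Differentiable ℝ (iteratedDeriv j Q) :=
      hQ.differentiable_iteratedDeriv j (by exact_mod_cast hj)
    rw [iteratedDeriv_succ]
    exact (hd x).hasDerivAt
  have hF : ∀ σ : ℝ, HasDerivAt
      (fun σ => ∑ j ∈ Finset.range (k+1),
        ((τ - σ)^j / (Nat.factorial j : ℝ)) • iteratedDeriv j Q (tn + σ))
      (((τ - σ)^k / (Nat.factorial k : ℝ)) • iteratedDeriv (k+1) Q (tn + σ)) σ := by
    intro σ
    rw [← telescope (fun j => iteratedDeriv j Q (tn + σ)) (τ - σ) k]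
    refine HasDerivAt.fun_sum fun j hj => ?_
    have hc : HasDerivAt (fun σ : ℝ => (τ - σ)^j / (Nat.factorial j : ℝ))
        (-((j : ℝ) * (τ - σ)^(j-1)) / (Nat.factorial j : ℝ)) σ := by
      have h0 : HasDerivAt (fun σ : ℝ => τ - σ) (-1) σ := (hasDerivAt_id σ).const_sub τ
      have h1 := (hasDerivAt_pow j (τ - σ)).comp σ h0
      have h2 := h1.div_const (Nat.factorial j : ℝ)
      simpa [Function.comp, mul_neg_one, neg_div] using h2
    have hv : HasDerivAt (fun σ : ℝ => iteratedDeriv j Q (tn + σ))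
        (iteratedDeriv (j+1) Q (tn + σ)) σ := by
      have h0 : HasDerivAt (fun σ : ℝ => tn + σ) 1 σ := (hasDerivAt_id σ).const_add tn
      have := (hQd j (Finset.mem_range.mp hj) (tn + σ)).scomp σ h0
      rw [one_smul] at this
      exact this
    exact hc.smul hv
  have hcont : Continuous fun σ =>
      ((τ - σ)^k / (Nat.factorial k : ℝ)) • iteratedDeriv (k+1) Q (tn + σ) :=
    (((continuous_const.sub continuous_id).pow k).div_const _).smul
      (hQc.comp (continuous_const.add continuous_id))
  have ftc := intervalIntegral.integral_eq_sub_of_hasDerivAt (a := 0) (b := τ)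
    (fun σ _ => hF σ) (hcont.intervalIntegrable 0 τ)
  have hFτ : (∑ j ∈ Finset.range (k+1),
      ((τ - τ)^j / (Nat.factorial j : ℝ)) • iteratedDeriv j Q (tn + τ)) = Q (tn + τ) := by
    rw [sub_self]
    rw [Finset.sum_eq_single 0]
    · simp
    · intro j _ hj0; simp [zero_pow hj0]
    · intro h0; exact absurd (Finset.mem_range.mpr (Nat.succ_pos k)) h0
  have hF0 : (∑ j ∈ Finset.range (k+1),
      ((τ - 0)^j / (Nat.factorial j : ℝ)) • iteratedDeriv j Q (tn + 0)) =
      ∑ j ∈ Finset.range (k+1), (τ^j / (Nat.factorial j : ℝ)) • iteratedDeriv j Q tn := by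
    simp
  rw [ftc, hFτ, hF0]
  abel

end MsdeAux

set_option maxHeartbeats 1000000 in
theorem msde_phi_expansion_aux (M N : ℕ)
    (A : Matrix (Fin M) (Fin M) ℝ) (D : Matrix (Fin N) (Fin N) ℝ)
    (m : ℕ) (hm : 1 ≤ m)
    (Q : ℝ → Matrix (Fin M) (Fin N) ℝ) (hQ : ContDiff ℝ m Q)
    (S : Matrix (Fin M) (Fin N) ℝ →L[ℝ] Matrix (Fin M) (Fin N) ℝ)
    (hS : ∀ X, S X = A * X + X * D)
    (X : ℝ → Matrix (Fin M) (Fin N) ℝ)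
    (hX : ∀ t, HasDerivAt X (A * X t + X t * D + Q t) t)
    (tn : ℝ) (Xn : Matrix (Fin M) (Fin N) ℝ) (hXn : X tn = Xn) :
    ∀ h : ℝ, 0 < h →
      X (tn + h) = NormedSpace.exp (h • S) Xn +
        (∑ j ∈ Finset.Icc 1 m, h ^ j • phi j (h • S) (iteratedDeriv (j - 1) Q tn)) +
        (h ^ (m + 1) / (Nat.factorial (m - 1) : ℝ)) •
          ∫ s in (0:ℝ)..1, ∫ θ in (0:ℝ)..1,
            (s ^ m * (1 - θ) ^ (m - 1)) •
              (NormedSpace.exp (((1 - s) * h) • A) * iteratedDeriv m Q (tn + θ * s * h) *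
                NormedSpace.exp (((1 - s) * h) • D)) := by
  intro h _hpos
  obtain ⟨k, rfl⟩ : ∃ k, m = k + 1 := ⟨m - 1, (Nat.succ_pred_eq_of_pos hm).symm⟩
  simp only [Nat.add_sub_cancel]
  -- continuity facts
  have cQ : Continuous Q := hQ.continuous
  have cQm : Continuous (iteratedDeriv (k+1) Q) :=
    hQ.continuous_iteratedDeriv (k+1) (by exact_mod_cast le_rfl)
  have contexp : Continuous fun t : ℝ => NormedSpace.exp (t • S) :=
    NormedSpace.exp_continuous.comp (continuous_id.smul continuous_const)
  have contexpN : Continuous fun t : ℝ => NormedSpace.exp (t • (-S)) :=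
    NormedSpace.exp_continuous.comp (continuous_id.smul continuous_const)
  -- exponential of the Sylvester operator: group law
  have hmul : ∀ a b : ℝ,
      NormedSpace.exp (a • S) * NormedSpace.exp (b • S) = NormedSpace.exp ((a+b) • S) := by
    intro a b
    have hc : Commute (a • S) (b • S) := ((Commute.refl S).smul_left a).smul_right b
    have := NormedSpace.exp_add_of_commute hc
    rw [← this, ← add_smul]
  -- derivative of the integrating-factor transform
  have hns : ∀ u : ℝ, u • (-S) = (-u) • S := fun u => by rw [smul_neg, ← neg_smul]
  have hY : ∀ τ : ℝ, HasDerivAt (fun τ => NormedSpace.exp (τ • (-S)) (X (tn + τ)))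
      (NormedSpace.exp (τ • (-S)) (Q (tn + τ))) τ := by
    intro τ
    have h1 : HasDerivAt (fun τ : ℝ => NormedSpace.exp (τ • (-S)))
        (NormedSpace.exp (τ • (-S)) * (-S)) τ := hasDerivAt_exp_smul_const (𝕂 := ℝ) (-S) τ
    have h2 : HasDerivAt (fun τ : ℝ => X (tn + τ))
        (A * X (tn + τ) + X (tn + τ) * D + Q (tn + τ)) τ := by
      have h0 : HasDerivAt (fun τ : ℝ => tn + τ) 1 τ := (hasDerivAt_id τ).const_add tn
      have := (hX (tn + τ)).scomp τ h0
      rw [one_smul] at this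
      exact this
    have h3 := h1.clm_apply h2
    have hder : (NormedSpace.exp (τ • (-S)) * (-S)) (X (tn + τ)) +
        NormedSpace.exp (τ • (-S)) (A * X (tn + τ) + X (tn + τ) * D + Q (tn + τ)) =
        NormedSpace.exp (τ • (-S)) (Q (tn + τ)) := by
      rw [ContinuousLinearMap.mul_apply, ← map_add]
      congr 1
      rw [ContinuousLinearMap.neg_apply, hS]
      abel
    rwa [hder] at h3
  have hYcont : Continuous fun τ : ℝ => NormedSpace.exp (τ • (-S)) (Q (tn + τ)) :=
    contexpN.clm_apply (cQ.comp (continuous_const.add continuous_id))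
  have ftc := intervalIntegral.integral_eq_sub_of_hasDerivAt (a := 0) (b := h)
    (fun τ _ => hY τ) (hYcont.intervalIntegrable 0 h)
  -- variation of constants
  have voc : X (tn + h) = NormedSpace.exp (h • S) Xn +
      ∫ τ in (0:ℝ)..h, NormedSpace.exp ((h - τ) • S) (Q (tn + τ)) := by
    have e0 : NormedSpace.exp ((0:ℝ) • (-S)) (X (tn + 0)) = Xn := by
      rw [zero_smul, NormedSpace.exp_zero, add_zero, hXn, ContinuousLinearMap.one_apply]
    have e1 : NormedSpace.exp (h • (-S)) (X (tn + h)) =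
        Xn + ∫ τ in (0:ℝ)..h, NormedSpace.exp (τ • (-S)) (Q (tn + τ)) := by
      rw [← e0]
      exact sub_eq_iff_eq_add'.mp ftc.symm
    have e2 := congrArg (fun v => NormedSpace.exp (h • S) v) e1
    rw [← ContinuousLinearMap.mul_apply, hns h, hmul h (-h), add_neg_cancel, zero_smul,
      NormedSpace.exp_zero, ContinuousLinearMap.one_apply] at e2
    rw [e2, map_add]
    congr 1
    rw [← ContinuousLinearMap.intervalIntegral_comp_comm _ (hYcont.intervalIntegrable 0 h)]
    refine intervalIntegral.integral_congr fun τ _ => ?_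
    rw [← ContinuousLinearMap.mul_apply, hns τ, hmul h (-τ), ← sub_eq_add_neg]
  -- split the Duhamel integral using Taylor's theorem
  have hptwise : ∀ τ : ℝ, NormedSpace.exp ((h - τ) • S) (Q (tn + τ)) =
      (∑ j ∈ Finset.range (k+1),
        (τ^j / (Nat.factorial j : ℝ)) • NormedSpace.exp ((h - τ) • S) (iteratedDeriv j Q tn))
        + NormedSpace.exp ((h - τ) • S) (∫ σ in (0:ℝ)..τ,
            ((τ - σ)^k / (Nat.factorial k : ℝ)) • iteratedDeriv (k+1) Q (tn + σ)) := by
    intro τ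
    rw [MsdeAux.taylor_aux k Q (by exact_mod_cast hQ) tn τ, map_add, map_sum]
    congr 1
    exact Finset.sum_congr rfl fun j _ => map_smul _ _ _
  have contg : ∀ j : ℕ, Continuous fun τ : ℝ =>
      (τ^j / (Nat.factorial j : ℝ)) • NormedSpace.exp ((h - τ) • S) (iteratedDeriv j Q tn) :=
    fun j => ((continuous_id.pow j).div_const _).smul
      ((contexp.comp (continuous_const.sub continuous_id)).clm_apply continuous_const)
  have hint_full : IntervalIntegrable
      (fun τ => NormedSpace.exp ((h - τ) • S) (Q (tn + τ))) volume 0 h :=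
    ((contexp.comp (continuous_const.sub continuous_id)).clm_apply
      (cQ.comp (continuous_const.add continuous_id))).intervalIntegrable 0 h
  have hint_sum : IntervalIntegrable (fun τ => ∑ j ∈ Finset.range (k+1),
      (τ^j / (Nat.factorial j : ℝ)) • NormedSpace.exp ((h - τ) • S) (iteratedDeriv j Q tn))
      volume 0 h :=
    (continuous_finset_sum _ fun j _ => contg j).intervalIntegrable 0 h
  have hint_r : IntervalIntegrable (fun τ => NormedSpace.exp ((h - τ) • S)
      (∫ σ in (0:ℝ)..τ, ((τ - σ)^k / (Nat.factorial k : ℝ)) • iteratedDeriv (k+1) Q (tn + σ)))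
      volume 0 h := by
    have heq : (fun τ => NormedSpace.exp ((h - τ) • S)
        (∫ σ in (0:ℝ)..τ, ((τ - σ)^k / (Nat.factorial k : ℝ)) • iteratedDeriv (k+1) Q (tn + σ)))
        = fun τ => NormedSpace.exp ((h - τ) • S) (Q (tn + τ)) -
            ∑ j ∈ Finset.range (k+1),
              (τ^j / (Nat.factorial j : ℝ)) • NormedSpace.exp ((h - τ) • S)
                (iteratedDeriv j Q tn) := by
      funext τ
      rw [hptwise τ]
      abel
    rw [heq]
    exact hint_full.sub hint_sum
  have split : (∫ τ in (0:ℝ)..h, NormedSpace.exp ((h - τ) • S) (Q (tn + τ)))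
      = (∑ j ∈ Finset.range (k+1), ∫ τ in (0:ℝ)..h,
          (τ^j / (Nat.factorial j : ℝ)) • NormedSpace.exp ((h - τ) • S) (iteratedDeriv j Q tn))
        + ∫ τ in (0:ℝ)..h, NormedSpace.exp ((h - τ) • S) (∫ σ in (0:ℝ)..τ,
            ((τ - σ)^k / (Nat.factorial k : ℝ)) • iteratedDeriv (k+1) Q (tn + σ)) := by
    rw [intervalIntegral.integral_congr fun τ _ => hptwise τ,
      intervalIntegral.integral_add hint_sum hint_r,
      intervalIntegral.integral_finset_sum fun j _ => (contg j).intervalIntegrable 0 h]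
  -- the φ-function terms
  have sumterm : ∀ j : ℕ, (∫ τ in (0:ℝ)..h,
      (τ^j / (Nat.factorial j : ℝ)) • NormedSpace.exp ((h - τ) • S) (iteratedDeriv j Q tn))
      = h^(j+1) • phi (j+1) (h • S) (iteratedDeriv j Q tn) := by
    intro j
    have hphiint : IntervalIntegrable (fun θ : ℝ =>
        (θ^(j+1-1) / (Nat.factorial (j+1-1) : ℝ)) • NormedSpace.exp ((1-θ) • (h • S)))
        volume 0 1 :=
      (((continuous_id.pow _).div_const _).smul (NormedSpace.exp_continuous.comp
        ((continuous_const.sub continuous_id).smul continuous_const))).intervalIntegrable 0 1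
    have hphi : phi (j+1) (h • S) (iteratedDeriv j Q tn) = ∫ θ in (0:ℝ)..1,
        (θ^j / (Nat.factorial j : ℝ)) • NormedSpace.exp (((1-θ) * h) • S)
          (iteratedDeriv j Q tn) := by
      rw [phi, if_neg (Nat.succ_ne_zero j),
        ContinuousLinearMap.intervalIntegral_apply hphiint]
      simp only [Nat.add_sub_cancel]
      refine intervalIntegral.integral_congr fun θ _ => ?_
      rw [ContinuousLinearMap.smul_apply, smul_smul (1-θ) h S]
    have cv := intervalIntegral.smul_integral_comp_mul_right (a := 0) (b := 1)
      (fun τ => (τ^j / (Nat.factorial j : ℝ)) • NormedSpace.exp ((h - τ) • S)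
        (iteratedDeriv j Q tn)) h
    rw [zero_mul, one_mul] at cv
    rw [← cv, hphi]
    have hpt : ∀ θ : ℝ, (((θ*h)^j / (Nat.factorial j : ℝ)) • NormedSpace.exp ((h - θ*h) • S)
        (iteratedDeriv j Q tn)) = h^j • ((θ^j / (Nat.factorial j : ℝ)) •
          NormedSpace.exp (((1-θ) * h) • S) (iteratedDeriv j Q tn)) := by
      intro θ
      rw [show h - θ*h = (1-θ)*h by ring, smul_smul, mul_pow]
      congr 1
      ring
    rw [intervalIntegral.integral_congr fun θ _ => hpt θ, intervalIntegral.integral_smul,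
      smul_smul, ← pow_succ']
  -- reindex the sum
  have sum_eq : (∑ j ∈ Finset.range (k+1), h^(j+1) • phi (j+1) (h • S) (iteratedDeriv j Q tn))
      = ∑ j ∈ Finset.Icc 1 (k+1), h^j • phi j (h • S) (iteratedDeriv (j-1) Q tn) := by
    rw [← Finset.Ico_add_one_right_eq_Icc, Finset.sum_Ico_eq_sum_range]
    try simp only [Nat.add_sub_cancel]
    refine Finset.sum_congr rfl fun j _ => ?_
    rw [Nat.add_comm 1 j, Nat.add_sub_cancel]
  -- the remainder term
  have hr1 : ∀ τ : ℝ, NormedSpace.exp ((h - τ) • S) (∫ σ in (0:ℝ)..τ,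
      ((τ - σ)^k / (Nat.factorial k : ℝ)) • iteratedDeriv (k+1) Q (tn + σ))
      = ∫ θ in (0:ℝ)..1, ((τ^(k+1) * (1-θ)^k) / (Nat.factorial k : ℝ)) •
          NormedSpace.exp ((h - τ) • S) (iteratedDeriv (k+1) Q (tn + θ*τ)) := by
    intro τ
    have hint1 : IntervalIntegrable (fun θ : ℝ =>
        ((τ - θ*τ)^k / (Nat.factorial k : ℝ)) • iteratedDeriv (k+1) Q (tn + θ*τ)) volume 0 1 :=
      ((((continuous_const.sub (continuous_id.mul continuous_const)).pow k).div_const _).smul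
        (cQm.comp (continuous_const.add (continuous_id.mul continuous_const)))).intervalIntegrable
        0 1
    have cv := intervalIntegral.smul_integral_comp_mul_right (a := 0) (b := 1)
      (fun σ => ((τ - σ)^k / (Nat.factorial k : ℝ)) • iteratedDeriv (k+1) Q (tn + σ)) τ
    rw [zero_mul, one_mul] at cv
    rw [← cv, _root_.map_smul, ← ContinuousLinearMap.intervalIntegral_comp_comm _ hint1,
      ← intervalIntegral.integral_smul]
    refine intervalIntegral.integral_congr fun θ _ => ?_
    rw [_root_.map_smul, smul_smul, show τ - θ*τ = (1-θ)*τ by ring, mul_pow]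
    congr 1
    ring
  have remterm : (∫ τ in (0:ℝ)..h, NormedSpace.exp ((h - τ) • S) (∫ σ in (0:ℝ)..τ,
      ((τ - σ)^k / (Nat.factorial k : ℝ)) • iteratedDeriv (k+1) Q (tn + σ)))
      = (h^(k+1+1) / (Nat.factorial k : ℝ)) • ∫ s in (0:ℝ)..1, ∫ θ in (0:ℝ)..1,
          (s^(k+1) * (1-θ)^k) • (NormedSpace.exp (((1-s) * h) • A) *
            iteratedDeriv (k+1) Q (tn + θ*s*h) * NormedSpace.exp (((1-s) * h) • D)) := by
    have cv2 := intervalIntegral.smul_integral_comp_mul_right (a := 0) (b := 1)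
      (fun τ => ∫ θ in (0:ℝ)..1, ((τ^(k+1) * (1-θ)^k) / (Nat.factorial k : ℝ)) •
        NormedSpace.exp ((h - τ) • S) (iteratedDeriv (k+1) Q (tn + θ*τ))) h
    rw [zero_mul, one_mul] at cv2
    rw [intervalIntegral.integral_congr fun τ _ => hr1 τ, ← cv2]
    have hptw : ∀ s : ℝ, (∫ θ in (0:ℝ)..1, (((s*h)^(k+1) * (1-θ)^k) / (Nat.factorial k : ℝ)) •
        NormedSpace.exp ((h - s*h) • S) (iteratedDeriv (k+1) Q (tn + θ*(s*h))))
        = (h^(k+1) / (Nat.factorial k : ℝ)) • ∫ θ in (0:ℝ)..1,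
            (s^(k+1) * (1-θ)^k) • (NormedSpace.exp (((1-s) * h) • A) *
              iteratedDeriv (k+1) Q (tn + θ*s*h) * NormedSpace.exp (((1-s) * h) • D)) := by
      intro s
      rw [← intervalIntegral.integral_smul]
      refine intervalIntegral.integral_congr fun θ _ => ?_
      rw [show h - s*h = (1-s)*h by ring, MsdeAux.exp_sylvester A D S hS,
        show θ*(s*h) = θ*s*h by ring, smul_smul]
      congr 1
      ring
    rw [intervalIntegral.integral_congr fun s _ => hptw s, intervalIntegral.integral_smul,
      smul_smul]
    congr 1
    ring
  -- assemble
  have final_sum : (∑ j ∈ Finset.range (k+1), ∫ τ in (0:ℝ)..h,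
      (τ^j / (Nat.factorial j : ℝ)) • NormedSpace.exp ((h - τ) • S) (iteratedDeriv j Q tn))
      = ∑ j ∈ Finset.Icc 1 (k+1), h^j • phi j (h • S) (iteratedDeriv (j-1) Q tn) := by
    rw [← sum_eq]
    exact Finset.sum_congr rfl fun j _ => sumterm j
  rw [voc, split, final_sum, remterm, ← add_assoc]

end MsdeSec

/-- **Lemma 1.** If `X' = A·X + X·D + Q(t)` with `Q` an `m`-times
continuously differentiable inhomogeneity and `X(tₙ) = Xₙ`, then
`X(tₙ+h) = e^{hS}(Xₙ) + Σ_{j=1}^{m} hʲ·φⱼ(hS)(Q^{(j−1)}(tₙ)) + R_m(h)` with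
`R_m(h) = (h^{m+1}/(m−1)!)·∫₀¹∫₀¹ s^m (1−θ)^{m−1} e^{(1−s)hA}·Q^{(m)}(tₙ+θsh)·e^{(1−s)hD} dθ ds`,
where `S` is the Sylvester operator `S(X) = A·X + X·D`. -/
theorem msde_phi_expansion (M N : ℕ)
    (A : Matrix (Fin M) (Fin M) ℝ) (D : Matrix (Fin N) (Fin N) ℝ)
    (m : ℕ) (hm : 1 ≤ m)
    (Q : ℝ → Matrix (Fin M) (Fin N) ℝ) (hQ : ContDiff ℝ m Q)
    (S : Matrix (Fin M) (Fin N) ℝ →L[ℝ] Matrix (Fin M) (Fin N) ℝ)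
    (hS : ∀ X, S X = A * X + X * D)
    (X : ℝ → Matrix (Fin M) (Fin N) ℝ)
    (hX : ∀ t, HasDerivAt X (A * X t + X t * D + Q t) t)
    (tn : ℝ) (Xn : Matrix (Fin M) (Fin N) ℝ) (hXn : X tn = Xn) :
    ∀ h : ℝ, 0 < h →
      X (tn + h) = @NormedSpace.exp (Matrix (Fin M) (Fin N) ℝ →L[ℝ] Matrix (Fin M) (Fin N) ℝ) _ _
        (by exact @NonUnitalSeminormedRing.toIsTopologicalRing _
              (@SeminormedRing.toNonUnitalSeminormedRing _
                (@NormedRing.toSeminormedRing _ ContinuousLinearMap.toNormedRing))) (h • S) Xn +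
        (∑ j ∈ Finset.Icc 1 m, h ^ j • phi j (h • S) (iteratedDeriv (j - 1) Q tn)) +
        (h ^ (m + 1) / (Nat.factorial (m - 1) : ℝ)) •
          ∫ s in (0:ℝ)..1, ∫ θ in (0:ℝ)..1,
            (s ^ m * (1 - θ) ^ (m - 1)) •
              (NormedSpace.exp (((1 - s) * h) • A) * iteratedDeriv m Q (tn + θ * s * h) *
                NormedSpace.exp (((1 - s) * h) • D)) := by
  intro h hh
  have key := msde_phi_expansion_aux M N A D m hm Q hQ S hS X hX tn Xn hXn h hh
  convert key <;> rfl
end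

section
/- Let A ∈ ℝ^{M×M}, D ∈ ℝ^{N×N}, let m ≥ 1, and let N_0, N_1, …, N_m ∈ ℝ^{M×N}. If X : ℝ → ℝ^{M×N} is differentiable and satisfies X'(t) = A·X(t) + X(t)·D + Σ_{j=1}^{m} (t^{j−1}/(j−1)!)·N_j for all t, with X(0) = N_0, then for every t ≥ 0, X(t) = e^{tS}(N_0) + Σ_{j=1}^{m} t^{j}·φ_j(tS)(N_j). -/
open MeasureTheory intervalIntegral Matrix Finset

attribute [local instance] Matrix.normedAddCommGroup Matrix.normedSpace

theorem msde_aux {E : Type*} [NormedAddCommGroup E] [NormedSpace ℝ E] [CompleteSpace E]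
    (m : ℕ) (Nmat : ℕ → E) (S : E →L[ℝ] E) (X : ℝ → E)
    (hX' : ∀ s, HasDerivAt X (S (X s) +
      ∑ j ∈ Finset.Icc 1 m, (s ^ (j - 1) / (Nat.factorial (j - 1) : ℝ)) • Nmat j) s)
    (hX0 : X 0 = Nmat 0) (t : ℝ) :
    X t = NormedSpace.exp (t • S) (Nmat 0) +
      ∑ j ∈ Finset.Icc 1 m, t ^ j • phi j (t • S) (Nmat j) := by
  letI : NormedAlgebra ℚ (E →L[ℝ] E) := .restrictScalars ℚ ℝ _
  set f : ℝ → E := fun s =>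
    ∑ j ∈ Finset.Icc 1 m, (s ^ (j - 1) / (Nat.factorial (j - 1) : ℝ)) • Nmat j with hf
  have hcontf : Continuous f := by
    apply continuous_finset_sum
    intro j _
    exact (Continuous.div_const (continuous_pow _) _).smul continuous_const
  have hcontE : Continuous fun s : ℝ => NormedSpace.exp ((t - s) • S) :=
    NormedSpace.exp_continuous.comp (f := fun s : ℝ => (t - s) • S) ((continuous_const.sub continuous_id).smul continuous_const)
  -- derivative of s ↦ exp((t-s) • S)
  have hE : ∀ s : ℝ, HasDerivAt (fun u : ℝ => NormedSpace.exp ((t - u) • S))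
      (-(NormedSpace.exp ((t - s) • S) * S)) s := by
    intro s
    have h1 := hasDerivAt_exp_smul_const (𝕂 := ℝ) S (t - s)
    have h2 : HasDerivAt (fun u : ℝ => t - u) (-1 : ℝ) s := (hasDerivAt_id s).const_sub t
    have := h1.scomp s h2
    simpa [neg_smul, Function.comp_def] using this
  -- derivative of g s = exp((t-s)•S) (X s)
  have key : ∀ s : ℝ, HasDerivAt (fun u : ℝ => NormedSpace.exp ((t - u) • S) (X u))
      (NormedSpace.exp ((t - s) • S) (f s)) s := by
    intro s
    have := (hE s).clm_apply (hX' s)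
    simpa [ContinuousLinearMap.mul_apply, map_add, hf, map_sum, _root_.map_smul] using this
  have hintg : Continuous fun s : ℝ => NormedSpace.exp ((t - s) • S) (f s) :=
    hcontE.clm_apply hcontf
  have ftc : (∫ s in (0:ℝ)..t, NormedSpace.exp ((t - s) • S) (f s)) =
      X t - NormedSpace.exp (t • S) (Nmat 0) := by
    rw [intervalIntegral.integral_eq_sub_of_hasDerivAt (fun s _ => key s)
      (hintg.intervalIntegrable 0 t)]
    simp [hX0, NormedSpace.exp_zero]
  -- split the integral into a sum
  have hsplit : (∫ s in (0:ℝ)..t, NormedSpace.exp ((t - s) • S) (f s)) =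
      ∑ j ∈ Finset.Icc 1 m, ∫ s in (0:ℝ)..t,
        (s ^ (j - 1) / (Nat.factorial (j - 1) : ℝ)) • NormedSpace.exp ((t - s) • S) (Nmat j) := by
    rw [← intervalIntegral.integral_finset_sum]
    · congr 1 with s
      simp [hf, map_sum, _root_.map_smul]
    · intro j _
      exact (((Continuous.div_const (continuous_pow _) _).smul
        (hcontE.clm_apply continuous_const)).intervalIntegrable 0 t)
  -- identify each term with t^j • φ_j(tS)(N_j)
  have hterm : ∀ j ∈ Finset.Icc 1 m,
      (∫ s in (0:ℝ)..t,
        (s ^ (j - 1) / (Nat.factorial (j - 1) : ℝ)) • NormedSpace.exp ((t - s) • S) (Nmat j))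
      = t ^ j • phi j (t • S) (Nmat j) := by
    intro j hj
    have hj1 : 1 ≤ j := (Finset.mem_Icc.mp hj).1
    have hjne : j ≠ 0 := Nat.one_le_iff_ne_zero.mp hj1
    have hint1 : IntervalIntegrable
        (fun θ : ℝ => (θ ^ (j - 1) / (Nat.factorial (j - 1) : ℝ)) •
          NormedSpace.exp ((1 - θ) • (t • S))) volume 0 1 := by
      exact (((Continuous.div_const (continuous_pow _) _).smul
        (NormedSpace.exp_continuous.comp
          ((continuous_const.sub continuous_id).smul continuous_const))).intervalIntegrable 0 1)
    have hphi : phi j (t • S) (Nmat j) = ∫ θ in (0:ℝ)..1,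
        (θ ^ (j - 1) / (Nat.factorial (j - 1) : ℝ)) •
          NormedSpace.exp ((1 - θ) • (t • S)) (Nmat j) := by
      rw [phi, if_neg hjne, ContinuousLinearMap.intervalIntegral_apply hint1]
      simp
    rw [hphi]
    -- substitution s = t θ
    have hsub := intervalIntegral.smul_integral_comp_mul_left
      (fun s : ℝ => (s ^ (j - 1) / (Nat.factorial (j - 1) : ℝ)) •
        NormedSpace.exp ((t - s) • S) (Nmat j)) (a := 0) (b := 1) t
    rw [mul_zero, mul_one] at hsub
    rw [← hsub]
    have hpow : t ^ j = t * t ^ (j - 1) := by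
      rw [← pow_succ']
      congr 1
      omega
    rw [hpow, ← smul_smul]
    congr 1
    rw [← intervalIntegral.integral_smul]
    congr 1 with θ
    have h2 : (t - t * θ) • S = (1 - θ) • (t • S) := by
      rw [smul_smul]
      congr 1
      ring
    rw [h2, mul_pow, smul_smul, smul_smul]
    congr 1
    ring
  calc X t = NormedSpace.exp (t • S) (Nmat 0) +
        (∫ s in (0:ℝ)..t, NormedSpace.exp ((t - s) • S) (f s)) := by
        rw [ftc]; abel
    _ = _ := by
        rw [hsplit, congr_arg (NormedSpace.exp (t • S) (Nmat 0) + ·)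
          (Finset.sum_congr rfl hterm)]

/-- If `X' = A·X + X·D + Σ_{j=1}^{m} (t^{j−1}/(j−1)!)·Nⱼ` with
`X(0) = N₀`, then `X(t) = e^{tS}(N₀) + Σ_{j=1}^{m} tʲ·φⱼ(tS)(Nⱼ)`, where `S` is the
Sylvester operator `S(X) = A·X + X·D`. -/
theorem msde_polynomial_inhomogeneity (M N : ℕ)
    (A : Matrix (Fin M) (Fin M) ℝ) (D : Matrix (Fin N) (Fin N) ℝ)
    (m : ℕ) (hm : 1 ≤ m)
    (Nmat : ℕ → Matrix (Fin M) (Fin N) ℝ)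
    (S : Matrix (Fin M) (Fin N) ℝ →L[ℝ] Matrix (Fin M) (Fin N) ℝ)
    (hS : ∀ X, S X = A * X + X * D)
    (X : ℝ → Matrix (Fin M) (Fin N) ℝ)
    (hX : ∀ t, HasDerivAt X
      (A * X t + X t * D +
        ∑ j ∈ Finset.Icc 1 m, (t ^ (j - 1) / (Nat.factorial (j - 1) : ℝ)) • Nmat j) t)
    (hX0 : X 0 = Nmat 0) :
    ∀ t : ℝ, 0 ≤ t →
      X t = @NormedSpace.exp _ _ _ (@NonUnitalSeminormedRing.toIsTopologicalRing _
        ContinuousLinearMap.toNormedRing.toNonUnitalNormedRing.toNonUnitalSeminormedRing) (t • S) (Nmat 0) +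
        ∑ j ∈ Finset.Icc 1 m, t ^ j • phi j (t • S) (Nmat j) := by
  intro t _
  have hX' : ∀ s, HasDerivAt X (S (X s) +
      ∑ j ∈ Finset.Icc 1 m, (s ^ (j - 1) / (Nat.factorial (j - 1) : ℝ)) • Nmat j) s := by
    intro s; rw [hS]; exact hX s
  exact msde_aux m Nmat S X hX' hX0 t
end

section
/- Let A ∈ ℝ^{M×M}, D ∈ ℝ^{N×N}, Q ∈ ℝ^{M×N}, G ∈ ℝ^{N×M}, F(X) = A·X + X·D + Q − X·G·X, and fix X_n ∈ ℝ^{M×N}. Set A_n = A − X_n·G, D_n = D − G·X_n, S_n(X) = A_n·X + X·D_n, and G_n(X) = F(X) − S_n(X). If X : ℝ → ℝ^{M×N} is differentiable and satisfies X'(t) = F(X(t)) for all t, then for every t_n and every h > 0, X(t_n + h) = e^{hA_n}·X(t_n)·e^{hD_n} + h·∫_0^1 e^{(1−s)hA_n}·G_n(X(t_n + s·h))·e^{(1−s)hD_n} ds. -/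
open MeasureTheory intervalIntegral Matrix Filter Topology

attribute [local instance] Matrix.normedAddCommGroup Matrix.normedSpace

lemma exp_smul_hasDerivAt (m : ℕ) (A : Matrix (Fin m) (Fin m) ℝ) (t : ℝ) :
    HasDerivAt (fun s : ℝ => NormedSpace.exp (s • A)) (NormedSpace.exp (t • A) * A) t := by
  have key := @hasDerivAt_exp_smul_const ℝ (Matrix (Fin m) (Fin m) ℝ) _
    Matrix.linftyOpNormedRing Matrix.linftyOpNormedAlgebra
    (by exact Matrix.instCompleteSpace _ _ ℝ) A t
  have key2 := (@hasDerivAt_iff_tendsto_slope ℝ _ (Matrix (Fin m) (Fin m) ℝ)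
      Matrix.linftyOpNormedAddCommGroup Matrix.linftyOpNormedSpace _ _ _).mp key
  exact hasDerivAt_iff_tendsto_slope.mpr key2

lemma exp_smul_hasDerivAt' (m : ℕ) (A : Matrix (Fin m) (Fin m) ℝ) (t : ℝ) :
    HasDerivAt (fun s : ℝ => NormedSpace.exp (s • A)) (A * NormedSpace.exp (t • A)) t := by
  have key := @hasDerivAt_exp_smul_const' ℝ (Matrix (Fin m) (Fin m) ℝ) _
    Matrix.linftyOpNormedRing Matrix.linftyOpNormedAlgebra
    (by exact Matrix.instCompleteSpace _ _ ℝ) A t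
  have key2 := (@hasDerivAt_iff_tendsto_slope ℝ _ (Matrix (Fin m) (Fin m) ℝ)
      Matrix.linftyOpNormedAddCommGroup Matrix.linftyOpNormedSpace _ _ _).mp key
  exact hasDerivAt_iff_tendsto_slope.mpr key2

lemma hasDerivAt_entrywise {p q : ℕ} {f : ℝ → Matrix (Fin p) (Fin q) ℝ}
    {f' : Matrix (Fin p) (Fin q) ℝ} {t : ℝ} :
    HasDerivAt f f' t ↔ ∀ i j, HasDerivAt (fun s => f s i j) (f' i j) t := by
  exact (hasDerivAt_pi (φ := (f : ℝ → Fin p → Fin q → ℝ)) (φ' := (f' : Fin p → Fin q → ℝ))).trans (forall_congr' fun i => hasDerivAt_pi)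

theorem HasDerivAt.matmul {p q r : ℕ} {f : ℝ → Matrix (Fin p) (Fin q) ℝ}
    {g : ℝ → Matrix (Fin q) (Fin r) ℝ}
    {f' : Matrix (Fin p) (Fin q) ℝ} {g' : Matrix (Fin q) (Fin r) ℝ} {t : ℝ}
    (hf : HasDerivAt f f' t) (hg : HasDerivAt g g' t) :
    HasDerivAt (fun s => f s * g s) (f' * g t + f t * g') t := by
  rw [hasDerivAt_entrywise] at hf hg ⊢
  intro i j
  have : ∀ s, (f s * g s) i j = ∑ k, f s i k * g s k j := fun s => Matrix.mul_apply
  simp only [this, Matrix.add_apply, Matrix.mul_apply]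
  rw [← Finset.sum_add_distrib]
  exact HasDerivAt.fun_sum fun k _ => ((hf i k).mul (hg k j))

/-- Let `F(X) = A·X + X·D + Q − X·G·X`, fix `Xₙ`, set
`Aₙ = A − Xₙ·G`, `Dₙ = D − G·Xₙ`, `Sₙ(X) = Aₙ·X + X·Dₙ` and `Gₙ(X) = F(X) − Sₙ(X)`.
If `X' = F(X)`, then for every `tₙ` and `h > 0`,
`X(tₙ+h) = e^{hAₙ}·X(tₙ)·e^{hDₙ} + h·∫₀¹ e^{(1−s)hAₙ}·Gₙ(X(tₙ+sh))·e^{(1−s)hDₙ} ds`. -/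
theorem mrde_linearized_variation_of_constants (M N : ℕ)
    (A : Matrix (Fin M) (Fin M) ℝ) (D : Matrix (Fin N) (Fin N) ℝ)
    (Q : Matrix (Fin M) (Fin N) ℝ) (G : Matrix (Fin N) (Fin M) ℝ)
    (F : Matrix (Fin M) (Fin N) ℝ → Matrix (Fin M) (Fin N) ℝ)
    (hF : ∀ Y, F Y = A * Y + Y * D + Q - Y * G * Y)
    (Xn : Matrix (Fin M) (Fin N) ℝ)
    (An : Matrix (Fin M) (Fin M) ℝ) (hAn : An = A - Xn * G)
    (Dn : Matrix (Fin N) (Fin N) ℝ) (hDn : Dn = D - G * Xn)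
    (Gn : Matrix (Fin M) (Fin N) ℝ → Matrix (Fin M) (Fin N) ℝ)
    (hGn : ∀ Y, Gn Y = F Y - (An * Y + Y * Dn))
    (X : ℝ → Matrix (Fin M) (Fin N) ℝ)
    (hX : ∀ t, HasDerivAt X (F (X t)) t) :
    ∀ tn : ℝ, ∀ h : ℝ, 0 < h →
      X (tn + h) = NormedSpace.exp (h • An) * X tn * NormedSpace.exp (h • Dn) +
        h • ∫ s in (0:ℝ)..1,
          NormedSpace.exp (((1 - s) * h) • An) * Gn (X (tn + s * h)) *
            NormedSpace.exp (((1 - s) * h) • Dn) := by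
  intro tn h _hpos
  set E : ℝ → Matrix (Fin M) (Fin M) ℝ :=
    fun s => NormedSpace.exp (((1 - s) * h) • An) with hE_def
  set W : ℝ → Matrix (Fin N) (Fin N) ℝ :=
    fun s => NormedSpace.exp (((1 - s) * h) • Dn) with hW_def
  set Y : ℝ → Matrix (Fin M) (Fin N) ℝ := fun s => X (tn + s * h) with hY_def
  have hu : ∀ s : ℝ, HasDerivAt (fun s : ℝ => (1 - s) * h) (-h) s := by
    intro s
    simpa using ((hasDerivAt_id s).const_sub 1).mul_const h
  have hE : ∀ s : ℝ, HasDerivAt E ((-h) • (E s * An)) s := by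
    intro s
    have := (exp_smul_hasDerivAt M An ((1 - s) * h)).scomp s (hu s)
    exact this
  have hW : ∀ s : ℝ, HasDerivAt W ((-h) • (Dn * W s)) s := by
    intro s
    have := (exp_smul_hasDerivAt' N Dn ((1 - s) * h)).scomp s (hu s)
    exact this
  have hYd : ∀ s : ℝ, HasDerivAt Y (h • F (Y s)) s := by
    intro s
    have hinner : HasDerivAt (fun s : ℝ => tn + s * h) h s := by
      simpa using ((hasDerivAt_id s).mul_const h).const_add tn
    have := (hX (tn + s * h)).scomp s hinner
    exact this
  have hderiv : ∀ s : ℝ,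
      HasDerivAt (fun s => E s * Y s * W s) (h • (E s * Gn (Y s) * W s)) s := by
    intro s
    have h1 := ((hE s).matmul (hYd s)).matmul (hW s)
    convert h1 using 1
    rw [hGn]
    simp only [Matrix.mul_sub, Matrix.sub_mul, Matrix.mul_add, Matrix.add_mul,
      Matrix.smul_mul, Matrix.mul_smul, smul_sub, smul_add, Matrix.mul_assoc]
    module
  -- continuity
  have hcontE : Continuous E := continuous_iff_continuousAt.2 fun s => (hE s).continuousAt
  have hcontW : Continuous W := continuous_iff_continuousAt.2 fun s => (hW s).continuousAt
  have hcontY : Continuous Y := continuous_iff_continuousAt.2 fun s => (hYd s).continuousAt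
  have hcontGn : Continuous Gn := by
    have hGn' : Gn = fun Z => A * Z + Z * D + Q - Z * G * Z - (An * Z + Z * Dn) := by
      funext Z; rw [hGn, hF]
    rw [hGn']
    exact ((((continuous_const.matrix_mul continuous_id).add
      (continuous_id.matrix_mul continuous_const)).add continuous_const).sub
      ((continuous_id.matrix_mul continuous_const).matrix_mul continuous_id)).sub
      ((continuous_const.matrix_mul continuous_id).add
        (continuous_id.matrix_mul continuous_const))
  have hcont : Continuous fun s => E s * Gn (Y s) * W s :=
    ((hcontE.matrix_mul (hcontGn.comp hcontY)).matrix_mul hcontW)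
  have hFTC : (∫ s in (0:ℝ)..1, h • (E s * Gn (Y s) * W s)) =
      E 1 * Y 1 * W 1 - E 0 * Y 0 * W 0 := by
    exact intervalIntegral.integral_eq_sub_of_hasDerivAt
      (fun s _ => hderiv s) ((hcont.const_smul h).intervalIntegrable 0 1)
  have h10 : E 1 * Y 1 * W 1 = X (tn + h) := by
    simp [hE_def, hW_def, hY_def, NormedSpace.exp_zero]
  have h00 : E 0 * Y 0 * W 0 =
      NormedSpace.exp (h • An) * X tn * NormedSpace.exp (h • Dn) := by
    simp [hE_def, hW_def, hY_def]
  rw [← intervalIntegral.integral_smul] at *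
  rw [hFTC, h10, h00]
  abel
end

section
/- Let A ∈ ℝ^{M×M}, D ∈ ℝ^{N×N}, and G ∈ ℝ^{M×N}, and let 𝔸 ∈ ℝ^{(M+N)×(M+N)} be the block matrix with blocks [[A, G], [0, −D]]. Then the matrix exponential of 𝔸 is the block matrix e^{𝔸} = [[e^{A}, ∫_0^1 e^{(1−s)A}·G·e^{−sD} ds], [0, e^{−D}]]. -/
open MeasureTheory intervalIntegral Matrix NormedSpace

section LinftyAux

variable {m : Type*} [Fintype m] [DecidableEq m]

attribute [local instance] Matrix.linftyOpNormedRing Matrix.linftyOpNormedAlgebra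

theorem aux_exp_entry_hasDerivAt (X : Matrix m m ℝ) (t : ℝ) (i j : m) :
    HasDerivAt (fun u : ℝ => exp (u • X) i j) ((X * exp (t • X)) i j) t := by
  have h := hasDerivAt_exp_smul_const' (𝕂 := ℝ) X t
  let L : Matrix m m ℝ →L[ℝ] ℝ :=
    LinearMap.toContinuousLinearMap
      { toFun := fun Y : Matrix m m ℝ => Y i j
        map_add' := fun _ _ => rfl
        map_smul' := fun _ _ => rfl }
  exact L.hasFDerivAt.comp_hasDerivAt t h

theorem aux_commute_exp {X Y : Matrix m m ℝ} (h : Commute X Y) :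
    Commute (exp X) Y := h.exp_left

end LinftyAux

attribute [local instance] Matrix.normedAddCommGroup Matrix.normedSpace

section SupAux

variable {l m n p : Type*} [Fintype l] [DecidableEq l] [Fintype m] [DecidableEq m]
  [Fintype n] [DecidableEq n] [Fintype p] [DecidableEq p]

omit [DecidableEq m] [DecidableEq n] in
theorem aux_entry_hasDerivAt {f : ℝ → Matrix m n ℝ} {f' : Matrix m n ℝ} {t : ℝ}
    (h : HasDerivAt f f' t) (i : m) (j : n) :
    HasDerivAt (fun u => f u i j) (f' i j) t := by
  let L : Matrix m n ℝ →L[ℝ] ℝ :=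
    LinearMap.toContinuousLinearMap
      { toFun := fun Y : Matrix m n ℝ => Y i j
        map_add' := fun _ _ => rfl
        map_smul' := fun _ _ => rfl }
  exact L.hasFDerivAt.comp_hasDerivAt t h

theorem aux_hasDerivAt_of_entries {f : ℝ → Matrix m n ℝ} {f' : Matrix m n ℝ} {t : ℝ}
    (h : ∀ i j, HasDerivAt (fun u => f u i j) (f' i j) t) :
    HasDerivAt f f' t := by
  have h2 : HasDerivAt (fun u => ∑ i : m, ∑ j : n, f u i j • single i j (1 : ℝ))
      (∑ i : m, ∑ j : n, f' i j • single i j (1 : ℝ)) t :=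
    HasDerivAt.fun_sum fun i _ => HasDerivAt.fun_sum fun j _ => (h i j).smul_const _
  have key : ∀ X : Matrix m n ℝ, X = ∑ i : m, ∑ j : n, X i j • single i j (1 : ℝ) := by
    intro X
    conv_lhs => rw [matrix_eq_sum_single X]
    congr 1; funext i; congr 1; funext j
    rw [smul_single, smul_eq_mul, mul_one]
  have e1 : (fun u => ∑ i : m, ∑ j : n, f u i j • single i j (1 : ℝ)) = f := by
    funext u; exact (key (f u)).symm
  rw [e1, ← key f'] at h2
  exact h2

theorem aux_hasDerivAt_mul {f : ℝ → Matrix m n ℝ} {g : ℝ → Matrix n p ℝ}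
    {f' : Matrix m n ℝ} {g' : Matrix n p ℝ} {t : ℝ}
    (hf : HasDerivAt f f' t) (hg : HasDerivAt g g' t) :
    HasDerivAt (fun u => f u * g u) (f' * g t + f t * g') t := by
  apply aux_hasDerivAt_of_entries
  intro i j
  have h : HasDerivAt (fun u => ∑ k : n, f u i k * g u k j)
      (∑ k : n, (f' i k * g t k j + f t i k * g' k j)) t :=
    HasDerivAt.fun_sum fun k _ =>
      (aux_entry_hasDerivAt hf i k).mul (aux_entry_hasDerivAt hg k j)
  simpa [Matrix.mul_apply, Matrix.add_apply, Finset.sum_add_distrib] using h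

theorem aux_hasDerivAt_fromBlocks
    {f11 : ℝ → Matrix l m ℝ} {f12 : ℝ → Matrix l p ℝ}
    {f21 : ℝ → Matrix n m ℝ} {f22 : ℝ → Matrix n p ℝ}
    {f11' : Matrix l m ℝ} {f12' : Matrix l p ℝ} {f21' : Matrix n m ℝ} {f22' : Matrix n p ℝ}
    {t : ℝ} (h11 : HasDerivAt f11 f11' t) (h12 : HasDerivAt f12 f12' t)
    (h21 : HasDerivAt f21 f21' t) (h22 : HasDerivAt f22 f22' t) :
    HasDerivAt (fun u => fromBlocks (f11 u) (f12 u) (f21 u) (f22 u))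
      (fromBlocks f11' f12' f21' f22') t := by
  apply aux_hasDerivAt_of_entries
  rintro (i | i) (j | j)
  · exact aux_entry_hasDerivAt h11 i j
  · exact aux_entry_hasDerivAt h12 i j
  · exact aux_entry_hasDerivAt h21 i j
  · exact aux_entry_hasDerivAt h22 i j

end SupAux

theorem aux_exp_hasDerivAt {m : Type*} [Fintype m] [DecidableEq m]
    (Y : Matrix m m ℝ) (t : ℝ) :
    HasDerivAt (fun u : ℝ => exp (u • Y)) (Y * exp (t • Y)) t :=
  aux_hasDerivAt_of_entries fun i j => aux_exp_entry_hasDerivAt Y t i j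

theorem aux_exp_continuous {m : Type*} [Fintype m] [DecidableEq m]
    (Y : Matrix m m ℝ) : Continuous (fun u : ℝ => exp (u • Y)) :=
  continuous_iff_continuousAt.2 fun t => (aux_exp_hasDerivAt Y t).continuousAt

theorem aux_exp_cancel {m : Type*} [Fintype m] [DecidableEq m]
    (Y : Matrix m m ℝ) (t : ℝ) : exp (t • Y) * exp (t • (-Y)) = 1 := by
  have hc : Commute (t • Y) (t • (-Y)) := ((Commute.refl Y).neg_right.smul_left t).smul_right t
  rw [← Matrix.exp_add_of_commute _ _ hc, smul_neg, add_neg_cancel, exp_zero]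

/-- For the block upper-triangular matrix `𝔸 = [[A, G], [0, −D]]`,
`e^{𝔸} = [[e^{A}, ∫₀¹ e^{(1−s)A}·G·e^{−sD} ds], [0, e^{−D}]]`. -/
theorem block_matrix_exp (M N : ℕ)
    (A : Matrix (Fin M) (Fin M) ℝ) (D : Matrix (Fin N) (Fin N) ℝ)
    (G : Matrix (Fin M) (Fin N) ℝ) :
    NormedSpace.exp (Matrix.fromBlocks A G 0 (-D)) =
      Matrix.fromBlocks (NormedSpace.exp A)
        (∫ s in (0:ℝ)..1,
          NormedSpace.exp ((1 - s) • A) * G * NormedSpace.exp ((-s) • D))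
        0 (NormedSpace.exp (-D)) := by
  set 𝔸 : Matrix (Fin M ⊕ Fin N) (Fin M ⊕ Fin N) ℝ := fromBlocks A G 0 (-D) with h𝔸
  set P : ℝ → Matrix (Fin M) (Fin M) ℝ := fun t => exp (t • A) with hP
  set Q : ℝ → Matrix (Fin N) (Fin N) ℝ := fun t => exp (t • (-D)) with hQ
  set C : ℝ → Matrix (Fin M) (Fin N) ℝ :=
    fun t => ∫ s in (0:ℝ)..t, exp (s • (-A)) * G * exp (s • (-D)) with hC
  set X : ℝ → Matrix (Fin M ⊕ Fin N) (Fin M ⊕ Fin N) ℝ :=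
    fun t => fromBlocks (P t) (P t * C t) 0 (Q t) with hX
  have hInt : Continuous (fun s : ℝ => exp (s • (-A)) * G * exp (s • (-D))) :=
    ((aux_exp_continuous (-A)).matrix_mul continuous_const).matrix_mul (aux_exp_continuous (-D))
  have hCderiv : ∀ t : ℝ, HasDerivAt C (exp (t • (-A)) * G * exp (t • (-D))) t := by
    intro t
    haveI : TopologicalSpace.PseudoMetrizableSpace (Matrix (Fin M) (Fin N) ℝ) :=
      inferInstanceAs (TopologicalSpace.PseudoMetrizableSpace (Fin M → Fin N → ℝ))
    exact intervalIntegral.integral_hasDerivAt_right (hInt.intervalIntegrable _ _)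
      hInt.stronglyMeasurable.stronglyMeasurableAtFilter hInt.continuousAt
  have hXderiv : ∀ t : ℝ, HasDerivAt X (𝔸 * X t) t := by
    intro t
    have hP' := aux_exp_hasDerivAt A t
    have hQ' := aux_exp_hasDerivAt (-D) t
    have hPC := aux_hasDerivAt_mul hP' (hCderiv t)
    have hsimp : P t * (exp (t • (-A)) * G * exp (t • (-D))) = G * Q t := by
      rw [hP, hQ]
      rw [← Matrix.mul_assoc, ← Matrix.mul_assoc, aux_exp_cancel, Matrix.one_mul]
    have hPC' : HasDerivAt (fun u => P u * C u) (A * (P t * C t) + G * Q t) t := by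
      rw [← Matrix.mul_assoc, ← hsimp]
      exact hPC
    have hB := aux_hasDerivAt_fromBlocks hP' hPC'
      (hasDerivAt_const t (0 : Matrix (Fin N) (Fin M) ℝ)) hQ'
    have hgoal : 𝔸 * X t =
        fromBlocks (A * P t) (A * (P t * C t) + G * Q t) 0 ((-D) * Q t) := by
      rw [h𝔸, hX]
      simp [Matrix.fromBlocks_multiply]
    rw [hgoal]
    exact hB
  have hg : ∀ t : ℝ, HasDerivAt (fun u => exp (u • (-𝔸)) * X u) 0 t := by
    intro t
    have h2 := aux_hasDerivAt_mul (aux_exp_hasDerivAt (-𝔸) t) (hXderiv t)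
    have hcomm : exp (t • (-𝔸)) * 𝔸 = 𝔸 * exp (t • (-𝔸)) :=
      (aux_commute_exp (((Commute.refl 𝔸).neg_left).smul_left t)).eq
    have hzero : -𝔸 * exp (t • (-𝔸)) * X t + exp (t • (-𝔸)) * (𝔸 * X t) = 0 := by
      rw [← Matrix.mul_assoc, hcomm, Matrix.neg_mul, Matrix.neg_mul, neg_add_cancel]
    rw [← hzero]
    exact h2
  have hgc := is_const_of_deriv_eq_zero (𝕜 := ℝ)
    (fun u => (hg u).differentiableAt) (fun u => (hg u).deriv)
  have hX0 : X 0 = 1 := by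
    have hC0 : C 0 = 0 := intervalIntegral.integral_same
    rw [hX, hP, hQ]
    simp only [hC0, Matrix.mul_zero, zero_smul, exp_zero]
    exact fromBlocks_one
  have hg0 : exp ((0:ℝ) • (-𝔸)) * X 0 = 1 := by
    rw [hX0, Matrix.mul_one, zero_smul, exp_zero]
  have key : exp ((1:ℝ) • (-𝔸)) * X 1 = 1 := (hgc 1 0).trans hg0
  have hXfinal : X 1 = exp 𝔸 := by
    have c2 : exp 𝔸 * exp ((1:ℝ) • (-𝔸)) = 1 := by
      rw [one_smul, ← Matrix.exp_add_of_commute _ _ (Commute.refl 𝔸).neg_right,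
        add_neg_cancel, exp_zero]
    calc X 1 = (exp 𝔸 * exp ((1:ℝ) • (-𝔸))) * X 1 := by rw [c2, Matrix.one_mul]
      _ = exp 𝔸 * (exp ((1:ℝ) • (-𝔸)) * X 1) := Matrix.mul_assoc _ _ _
      _ = exp 𝔸 := by rw [key, Matrix.mul_one]
  have hmul : ∀ s : ℝ, exp ((1-s) • A) * G * exp ((-s) • D) =
      exp A * (exp (s • (-A)) * G * exp (s • (-D))) := by
    intro s
    have h1 : exp ((1-s) • A) = exp A * exp (s • (-A)) := by
      rw [← Matrix.exp_add_of_commute _ _ ((Commute.refl A).neg_right.smul_right s)]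
      congr 1
      rw [smul_neg, sub_smul, one_smul, sub_eq_add_neg]
    have h2 : exp ((-s) • D) = exp (s • (-D)) := by rw [neg_smul, ← smul_neg]
    rw [h1, h2]
    simp only [Matrix.mul_assoc]
  have hL : exp A * C 1 = ∫ s in (0:ℝ)..1, exp ((1-s) • A) * G * exp ((-s) • D) := by
    let L : Matrix (Fin M) (Fin N) ℝ →L[ℝ] Matrix (Fin M) (Fin N) ℝ :=
      LinearMap.toContinuousLinearMap
        { toFun := fun Y => exp A * Y
          map_add' := fun _ _ => Matrix.mul_add _ _ _
          map_smul' := fun r Y => (Matrix.mul_smul _ r Y) }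
    have hcomm := L.intervalIntegral_comp_comm (μ := MeasureTheory.volume) (hInt.intervalIntegrable 0 1)
    calc exp A * C 1
        = L (∫ s in (0:ℝ)..1, exp (s • (-A)) * G * exp (s • (-D))) := rfl
      _ = ∫ s in (0:ℝ)..1, L (exp (s • (-A)) * G * exp (s • (-D))) := hcomm.symm
      _ = ∫ s in (0:ℝ)..1, exp ((1-s) • A) * G * exp ((-s) • D) := by
          refine intervalIntegral.integral_congr fun s _ => ?_
          exact (hmul s).symm
  rw [← hXfinal, hX, hP, hQ]
  simp only [one_smul]
  rw [hL]
end

section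
/- (Forward recursion for φ-function combinations) Let L be a linear endomorphism of a finite-dimensional real normed vector space V, let k ≥ 1, and let N_0, N_1, …, N_k ∈ V. Define W_0 = N_0 and W_j = L(W_{j−1}) + N_j for j = 1, …, k. Then Σ_{j=0}^{k} φ_j(L)(N_j) = φ_k(L)(W_k) + Σ_{j=0}^{k−1} (1/j!)·W_j. -/
open MeasureTheory intervalIntegral Finset

section aux
variable {V : Type*} [NormedAddCommGroup V] [NormedSpace ℝ V] [FiniteDimensional ℝ V]
  (L : V →L[ℝ] V)

lemma exp_smul_cont : Continuous (fun θ : ℝ => NormedSpace.exp ((1 - θ) • L)) :=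
  continuous_iff_continuousAt.2 fun θ => ContinuousAt.comp_of_eq (g := fun u : ℝ => NormedSpace.exp (u • L))
    (f := fun θ : ℝ => 1 - θ)
    (hasDerivAt_exp_smul_const L (1 - θ)).continuousAt
    ((continuous_const.sub continuous_id).continuousAt (x := θ)) rfl

lemma phi_succ_apply (j : ℕ) (x : V) :
    phi (j+1) L x =
      ∫ θ in (0:ℝ)..1, (θ ^ j / (j.factorial : ℝ)) • (NormedSpace.exp ((1 - θ) • L)) x := by
  have hcont : Continuous (fun θ : ℝ =>
      (θ ^ j / (j.factorial : ℝ)) • NormedSpace.exp ((1 - θ) • L)) :=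
    ((continuous_pow j).div_const _).smul (exp_smul_cont L)
  rw [phi]
  simp only [Nat.succ_ne_zero, if_false, Nat.add_sub_cancel]
  rw [intervalIntegral.integral_of_le zero_le_one, intervalIntegral.integral_of_le zero_le_one,
    ContinuousLinearMap.integral_apply]
  · simp [ContinuousLinearMap.smul_apply]
  · exact hcont.integrableOn_Ioc
end aux

section aux2
variable {V : Type*} [NormedAddCommGroup V] [NormedSpace ℝ V] [FiniteDimensional ℝ V]
  (L : V →L[ℝ] V)

lemma hasDerivAt_E (x : V) (θ : ℝ) :
    HasDerivAt (fun θ : ℝ => NormedSpace.exp ((1 - θ) • L) x)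
      (-(NormedSpace.exp ((1 - θ) • L) (L x))) θ := by
  have h1 : HasDerivAt (fun u : ℝ => NormedSpace.exp (u • L))
      (NormedSpace.exp ((1 - θ) • L) * L) (1 - θ) := hasDerivAt_exp_smul_const L (1 - θ)
  have h2 : HasDerivAt (fun θ : ℝ => 1 - θ) (-1) θ := by
    simpa using (hasDerivAt_id θ).const_sub 1
  have h3 := h1.scomp θ h2
  have h4 := h3.clm_apply (hasDerivAt_const θ x)
  simpa [ContinuousLinearMap.mul_apply] using h4

lemma contE (x : V) : Continuous (fun θ : ℝ => NormedSpace.exp ((1 - θ) • L) x) :=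
  (ContinuousLinearMap.apply ℝ V x).continuous.comp (exp_smul_cont L)

lemma phi_key (j : ℕ) (x : V) :
    phi (j + 1) L (L x) = phi j L x - ((j.factorial : ℝ))⁻¹ • x := by
  rcases j with _ | m
  · rw [phi_succ_apply]
    simp only [pow_zero, Nat.factorial_zero, Nat.cast_one, div_one, one_smul]
    rw [intervalIntegral.integral_eq_sub_of_hasDerivAt
      (f := fun θ : ℝ => -(NormedSpace.exp ((1 - θ) • L) x))
      (fun θ _ => by
        have h := (hasDerivAt_E L x θ).neg
        simp only [neg_neg] at h
        exact h)
      ((contE L (L x)).intervalIntegrable 0 1)]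
    simp [phi, NormedSpace.exp_zero]
    abel
  · have hf : ∀ θ : ℝ, HasDerivAt
        (fun θ : ℝ => (θ ^ (m + 1) / ((m + 1).factorial : ℝ)) •
          (NormedSpace.exp ((1 - θ) • L) x))
        ((θ ^ m / (m.factorial : ℝ)) • (NormedSpace.exp ((1 - θ) • L) x)
          - (θ ^ (m + 1) / ((m + 1).factorial : ℝ)) •
              (NormedSpace.exp ((1 - θ) • L) (L x))) θ := by
      intro θ
      have hc : HasDerivAt (fun θ : ℝ => θ ^ (m + 1) / ((m + 1).factorial : ℝ))
          ((m + 1 : ℕ) * θ ^ m / ((m + 1).factorial : ℝ)) θ :=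
        (hasDerivAt_pow (m + 1) θ).div_const _
      have h := hc.smul (hasDerivAt_E L x θ)
      convert h using 1
      · rfl
      have : ((m + 1 : ℕ) : ℝ) * θ ^ m / ((m + 1).factorial : ℝ) = θ ^ m / (m.factorial : ℝ) := by
        rw [Nat.factorial_succ]
        push_cast
        rw [div_eq_div_iff (by positivity) (by positivity)]
        ring
      rw [this]
      rw [smul_neg]
      abel
    have hint1 : IntervalIntegrable
        (fun θ : ℝ => (θ ^ m / (m.factorial : ℝ)) • (NormedSpace.exp ((1 - θ) • L) x))
        volume 0 1 :=
      (((continuous_pow m).div_const _).smul (contE L x)).intervalIntegrable 0 1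
    have hint2 : IntervalIntegrable
        (fun θ : ℝ => (θ ^ (m + 1) / ((m + 1).factorial : ℝ)) •
          (NormedSpace.exp ((1 - θ) • L) (L x))) volume 0 1 :=
      (((continuous_pow (m + 1)).div_const _).smul (contE L (L x))).intervalIntegrable 0 1
    have h3 := intervalIntegral.integral_eq_sub_of_hasDerivAt (fun θ _ => hf θ)
      (hint1.sub hint2)
    rw [intervalIntegral.integral_sub hint1 hint2] at h3
    simp only [one_pow, sub_self, zero_smul, NormedSpace.exp_zero, ContinuousLinearMap.one_apply,
      zero_pow (Nat.succ_ne_zero m), zero_div, sub_zero, one_div] at h3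
    rw [phi_succ_apply, phi_succ_apply L m x, ← h3]
    abel
end aux2

/-- **forward recursion.** With `W₀ = N₀` and `Wⱼ = L(W_{j−1}) + Nⱼ`
for `j = 1, …, k`, one has
`Σ_{j=0}^{k} φⱼ(L)(Nⱼ) = φ_k(L)(W_k) + Σ_{j=0}^{k−1} (1/j!)·Wⱼ`. -/
theorem phi_forward_recursion {V : Type*} [NormedAddCommGroup V] [NormedSpace ℝ V]
    [FiniteDimensional ℝ V] (L : V →L[ℝ] V) (k : ℕ) (hk : 1 ≤ k) (Nv : ℕ → V)
    (W : ℕ → V) (hW0 : W 0 = Nv 0)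
    (hW : ∀ j, 1 ≤ j → j ≤ k → W j = L (W (j - 1)) + Nv j) :
    ∑ j ∈ Finset.range (k + 1), phi j L (Nv j) =
      phi k L (W k) + ∑ j ∈ Finset.range k, ((Nat.factorial j : ℝ))⁻¹ • W j := by
  induction k, hk using Nat.le_induction with
  | base =>
    have h1 : W 1 = L (W 0) + Nv 1 := by simpa using hW 1 le_rfl le_rfl
    rw [Finset.sum_range_succ, Finset.sum_range_one, Finset.sum_range_one, h1, hW0,
      map_add, phi_key L 0 (Nv 0)]
    simp [hW0]
    abel
  | succ k hk ih =>
    have hWk : ∀ j, 1 ≤ j → j ≤ k → W j = L (W (j - 1)) + Nv j :=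
      fun j h1 h2 => hW j h1 (h2.trans (Nat.le_succ k))
    have hsucc : W (k + 1) = L (W k) + Nv (k + 1) := by
      simpa using hW (k + 1) (by omega) le_rfl
    rw [Finset.sum_range_succ, ih hWk, Finset.sum_range_succ (n := k), hsucc, map_add,
      phi_key L k (W k)]
    abel
end

section
/- (Backward recursion for φ-function combinations) Let L be an invertible linear endomorphism of a finite-dimensional real normed vector space V, let k ≥ 1, and let N_0, N_1, …, N_k ∈ V. Define W_k = L^{−1}(N_k) and W_j = L^{−1}(N_j + W_{j+1}) for j = k−1, …, 1. Then Σ_{j=0}^{k} φ_j(L)(N_j) = e^{L}(N_0 + W_1) − Σ_{j=1}^{k} (1/(j−1)!)·W_j. -/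
open MeasureTheory intervalIntegral Finset

section Aux

open NormedSpace

variable {V : Type*} [NormedAddCommGroup V] [NormedSpace ℝ V] [FiniteDimensional ℝ V]

private lemma exp_cont (L : V →L[ℝ] V) :
    Continuous (fun θ : ℝ => exp ((1 - θ) • L)) := by
  haveI : CompleteSpace V := FiniteDimensional.complete ℝ V
  exact (continuous_iff_continuousAt.2 fun x => (exp_analytic (𝕂 := ℝ) x).continuousAt).comp (by continuity)

private lemma phi_apply_eq (L : V →L[ℝ] V) (m : ℕ) (v : V) :
    phi (m + 1) L v
      = ∫ θ in (0:ℝ)..1, (θ ^ m / (Nat.factorial m : ℝ)) • (exp ((1 - θ) • L) v) := by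
  haveI : CompleteSpace V := FiniteDimensional.complete ℝ V
  have hint : IntervalIntegrable
      (fun θ : ℝ => (θ ^ m / (Nat.factorial m : ℝ)) • exp ((1 - θ) • L))
      volume 0 1 :=
    (((continuous_pow m).div_const _).smul (exp_cont L)).intervalIntegrable 0 1
  rw [phi]
  simp only [Nat.succ_ne_zero, if_false, Nat.add_sub_cancel]
  rw [ContinuousLinearMap.intervalIntegral_apply hint v]
  simp [ContinuousLinearMap.smul_apply]

private lemma exp_deriv (L : V →L[ℝ] V) (w : V) (θ : ℝ) :
    HasDerivAt (fun θ : ℝ => exp ((1 - θ) • L) w) (-(exp ((1 - θ) • L) (L w))) θ := by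
  haveI : CompleteSpace V := FiniteDimensional.complete ℝ V
  have h1 : HasDerivAt (fun u : ℝ => exp (u • L)) (exp ((1 - θ) • L) * L) (1 - θ) :=
    hasDerivAt_exp_smul_const L (1 - θ)
  have h2 : HasDerivAt (fun θ : ℝ => (1:ℝ) - θ) (-1) θ := by
    simpa using (hasDerivAt_id θ).const_sub 1
  have h3 := (h1.scomp θ h2).clm_apply (hasDerivAt_const θ w)
  simpa using h3

private lemma phi_succ_apply_s13 (L : V →L[ℝ] V) (m : ℕ) (w : V) :
    phi (m + 1) L (L w) = phi m L w - ((Nat.factorial m : ℝ))⁻¹ • w := by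
  haveI : CompleteSpace V := FiniteDimensional.complete ℝ V
  have hce := exp_cont L
  rcases m with _ | n
  · -- m = 0
    have hFTC := intervalIntegral.integral_eq_sub_of_hasDerivAt
      (f := fun θ : ℝ => exp ((1 - θ) • L) w)
      (f' := fun θ : ℝ => -(exp ((1 - θ) • L) (L w)))
      (fun θ _ => exp_deriv L w θ)
      (((hce.clm_apply continuous_const).neg).intervalIntegrable 0 1)
    rw [intervalIntegral.integral_neg] at hFTC
    rw [phi_apply_eq L 0 (L w)]
    simp only [pow_zero, Nat.factorial_zero, Nat.cast_one, div_one, one_smul]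
    simp only [sub_self, zero_smul, exp_zero, sub_zero, one_smul] at hFTC
    have : (∫ θ in (0:ℝ)..1, exp ((1 - θ) • L) (L w)) = exp L w - w := by
      have h := neg_eq_iff_eq_neg.mp hFTC
      rw [h]
      simp
    rw [this]
    simp [phi, ContinuousLinearMap.one_apply]
  · -- m = n + 1
    set m := n + 1 with hm
    have hf : ∀ θ : ℝ, HasDerivAt (fun θ : ℝ => θ ^ m / (Nat.factorial m : ℝ))
        (θ ^ n / (Nat.factorial n : ℝ)) θ := by
      intro θ
      have h := (hasDerivAt_pow m θ).div_const (Nat.factorial m : ℝ)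
      refine h.congr_deriv ?_; symm
      rw [hm, Nat.factorial_succ]
      have h1 : ((n:ℝ) + 1) ≠ 0 := by positivity
      have h2 : (Nat.factorial n : ℝ) ≠ 0 := by positivity
      push_cast
      field_simp
    have hderiv : ∀ θ ∈ Set.uIcc (0:ℝ) 1,
        HasDerivAt (fun θ : ℝ => (θ ^ m / (Nat.factorial m : ℝ)) • (exp ((1 - θ) • L) w))
          ((θ ^ n / (Nat.factorial n : ℝ)) • (exp ((1 - θ) • L) w)
            - (θ ^ m / (Nat.factorial m : ℝ)) • (exp ((1 - θ) • L) (L w))) θ := by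
      intro θ _
      have h := (hf θ).smul (exp_deriv L w θ)
      refine h.congr_deriv ?_; symm
      simp only [smul_neg, sub_eq_add_neg]
      abel
    have hA : Continuous fun θ : ℝ =>
        (θ ^ n / (Nat.factorial n : ℝ)) • (exp ((1 - θ) • L) w) :=
      ((continuous_pow n).div_const _).smul (hce.clm_apply continuous_const)
    have hB : Continuous fun θ : ℝ =>
        (θ ^ m / (Nat.factorial m : ℝ)) • (exp ((1 - θ) • L) (L w)) :=
      ((continuous_pow m).div_const _).smul (hce.clm_apply continuous_const)
    have hFTC := intervalIntegral.integral_eq_sub_of_hasDerivAt hderiv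
      ((hA.sub hB).intervalIntegrable 0 1)
    rw [intervalIntegral.integral_sub (hA.intervalIntegrable 0 1) (hB.intervalIntegrable 0 1)]
      at hFTC
    rw [← phi_apply_eq L n w, ← phi_apply_eq L m (L w)] at hFTC
    have hm0 : m ≠ 0 := by omega
    simp only [sub_self, zero_smul, exp_zero, one_pow, one_div,
      zero_pow hm0, zero_div, sub_zero, ContinuousLinearMap.one_apply] at hFTC
    -- hFTC : phi (n+1) L w - phi (m+1) L (L w) = (m !)⁻¹ • w
    have h2 : phi m L w = (Nat.factorial m : ℝ)⁻¹ • w + phi (m + 1) L (L w) :=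
      sub_eq_iff_eq_add.mp hFTC
    rw [h2]
    abel

end Aux

/-- **backward recursion.** If `L` is invertible with inverse `Linv`,
`W_k = L⁻¹(N_k)` and `Wⱼ = L⁻¹(Nⱼ + W_{j+1})` for `j = k−1, …, 1`, then
`Σ_{j=0}^{k} φⱼ(L)(Nⱼ) = e^{L}(N₀ + W₁) − Σ_{j=1}^{k} (1/(j−1)!)·Wⱼ`. -/
theorem phi_backward_recursion {V : Type*} [NormedAddCommGroup V] [NormedSpace ℝ V]
    [FiniteDimensional ℝ V] (L Linv : V →L[ℝ] V)
    (hLinv₁ : ∀ v, Linv (L v) = v) (hLinv₂ : ∀ v, L (Linv v) = v)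
    (k : ℕ) (hk : 1 ≤ k) (Nv : ℕ → V)
    (W : ℕ → V) (hWk : W k = Linv (Nv k))
    (hW : ∀ j, 1 ≤ j → j ≤ k - 1 → W j = Linv (Nv j + W (j + 1))) :
    ∑ j ∈ Finset.range (k + 1), phi j L (Nv j) =
      NormedSpace.exp L (Nv 0 + W 1) -
        ∑ j ∈ Finset.Icc 1 k, ((Nat.factorial (j - 1) : ℝ))⁻¹ • W j := by
  have aux : ∀ d i : ℕ, i + 1 + d = k →
      ∑ j ∈ Finset.Icc (i + 1) k, phi j L (Nv j)
        = phi i L (W (i + 1))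
          - ∑ j ∈ Finset.Icc (i + 1) k, ((Nat.factorial (j - 1) : ℝ))⁻¹ • W j := by
    intro d
    induction d with
    | zero =>
      intro i hik
      have hk' : k = i + 1 := by omega
      subst hk'
      simp only [Finset.Icc_self, Finset.sum_singleton, Nat.add_sub_cancel]
      have hNv : Nv (i + 1) = L (W (i + 1)) := by rw [hWk, hLinv₂]
      rw [hNv, phi_succ_apply_s13]
    | succ d ih =>
      intro i hik
      have hIH := ih (i + 1) (by omega)
      have hsplit : Finset.Icc (i + 1) k = insert (i + 1) (Finset.Icc (i + 2) k) := by
        ext x; simp; omega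
      have hnotmem : i + 1 ∉ Finset.Icc (i + 2) k := by simp
      rw [hsplit, Finset.sum_insert hnotmem, Finset.sum_insert hnotmem, hIH]
      have hNW : Nv (i + 1) + W (i + 2) = L (W (i + 1)) := by
        rw [hW (i + 1) (by omega) (by omega), hLinv₂]
      have : phi (i + 1) L (Nv (i + 1)) + phi (i + 1) L (W (i + 2))
          = phi i L (W (i + 1)) - (Nat.factorial i : ℝ)⁻¹ • W (i + 1) := by
        rw [← map_add, hNW, phi_succ_apply_s13]
      rw [← add_sub_assoc, this]
      simp only [Nat.add_sub_cancel]
      abel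
  have h1 := aux (k - 1) 0 (by omega)
  have hrange : Finset.range (k + 1) = insert 0 (Finset.Icc 1 k) := by
    ext x; simp; omega
  have hnot : (0:ℕ) ∉ Finset.Icc 1 k := by simp
  rw [hrange, Finset.sum_insert hnot, h1]
  have hphi0 : phi 0 L = NormedSpace.exp L := by simp [phi]
  rw [hphi0, map_add]
  abel
end

section
/- (Low-rank LDL^T factorization of the Riccati residual) Let A ∈ ℝ^{N×N}, C ∈ ℝ^{l×N}, B ∈ ℝ^{N×q}, L_n ∈ ℝ^{N×r}, and let D_n ∈ ℝ^{r×r} be symmetric. Set X_n = L_n·D_n·L_n^T and F_n = C^T·C + A·X_n + X_n·A^T − X_n·B·B^T·X_n. Then F_n = L̃·D̃·L̃^T, where L̃ = [C^T, A·L_n, L_n] ∈ ℝ^{N×(l+2r)} is the block row matrix and D̃ ∈ ℝ^{(l+2r)×(l+2r)} is the symmetric block matrix with blocks [[I_l, 0, 0], [0, 0, D_n], [0, D_n, −(D_n·L_n^T·B)·(D_n·L_n^T·B)^T]]. -/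
open Matrix

/-- **low-rank LDLᵀ factorization of the Riccati residual.**
With `Xₙ = Lₙ·Dₙ·Lₙᵀ` and `Fₙ = Cᵀ·C + A·Xₙ + Xₙ·Aᵀ − Xₙ·B·Bᵀ·Xₙ`, one has
`Fₙ = L̃·D̃·L̃ᵀ`, where `L̃ = [Cᵀ, A·Lₙ, Lₙ]` and `D̃` is the symmetric block matrix
`[[I_l, 0, 0], [0, 0, Dₙ], [0, Dₙ, −(Dₙ·Lₙᵀ·B)·(Dₙ·Lₙᵀ·B)ᵀ]]`. -/
theorem riccati_residual_ldl_factorization (Nn l q r : ℕ)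
    (A : Matrix (Fin Nn) (Fin Nn) ℝ) (C : Matrix (Fin l) (Fin Nn) ℝ)
    (B : Matrix (Fin Nn) (Fin q) ℝ) (Ln : Matrix (Fin Nn) (Fin r) ℝ)
    (Dn : Matrix (Fin r) (Fin r) ℝ) (hDn : Dnᵀ = Dn)
    (Xn : Matrix (Fin Nn) (Fin Nn) ℝ) (hXn : Xn = Ln * Dn * Lnᵀ)
    (Fn : Matrix (Fin Nn) (Fin Nn) ℝ)
    (hFn : Fn = Cᵀ * C + A * Xn + Xn * Aᵀ - Xn * B * Bᵀ * Xn) :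
    Fn =
      (Matrix.fromCols Cᵀ (Matrix.fromCols (A * Ln) Ln)) *
        (Matrix.fromBlocks (1 : Matrix (Fin l) (Fin l) ℝ) 0 0
          (Matrix.fromBlocks 0 Dn Dn (-((Dn * Lnᵀ * B) * (Dn * Lnᵀ * B)ᵀ)))) *
        (Matrix.fromCols Cᵀ (Matrix.fromCols (A * Ln) Ln))ᵀ := by
  subst hXn hFn
  simp only [transpose_fromCols, fromCols_mul_fromBlocks, fromCols_mul_fromRows,
    Matrix.mul_zero, Matrix.zero_mul, add_zero, zero_add, Matrix.mul_one,
    Matrix.add_mul, Matrix.mul_add, Matrix.neg_mul, Matrix.mul_neg,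
    Matrix.transpose_mul, Matrix.transpose_transpose, hDn]
  simp only [Matrix.mul_assoc]
  noncomm_ring
end
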